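/- arXiv:1901.08337 — 3 statements merged into one kernel-verified Lean document; each statement's English description precedes it below -/
import Mathlib

section
/- Let $H \in C^0(\mathbb{R}^2;\mathbb{R})$ and let $u \in W^{1,1}(\mathbb{R}/T\mathbb{Z};\mathbb{R}^2)$ satisfy: $|\dot u|$ is constant a.e., and $u$ is a critical point of the energy $\mathcal{E}_H(u) = \int_0^T |\dot u|\,dt + \int_0^T Q_H(u)\cdot i\dot u\,dt$ (in the sense that $\mathcal{E}_H'(u)[\varphi]=0$ for all periodic test functions $\varphi$), where $Q_H$ is locally Lipschitz with $\mathrm{div}\,Q_H = H$ a.e. Then $u \in C^2(\mathbb{R}/T\mathbb{Z};\mathbb{R}^2)$ and $u$ solves pointwise the equation $\ddot u = \left(\frac{1}{T}\int_0^T |\dot u|\,dt\right) H(u)\, i\dot u$. -/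
open MeasureTheory Real intervalIntegral

/-- Counterclockwise rotation by `π/2` in the plane, i.e. multiplication by `i`. -/
def rot (v : ℝ × ℝ) : ℝ × ℝ := (-v.2, v.1)

/-- Euclidean dot product on `ℝ²`. -/
def dot2 (v w : ℝ × ℝ) : ℝ := v.1 * w.1 + v.2 * w.2

/-- Euclidean norm on `ℝ²`. -/
noncomputable def nrm2 (v : ℝ × ℝ) : ℝ := Real.sqrt (v.1 ^ 2 + v.2 ^ 2)

lemma continuous_rot : Continuous rot := by
  unfold rot; fun_prop

lemma dot2_smul_right (v w : ℝ × ℝ) (r : ℝ) : dot2 v (r • w) = r * dot2 v w := by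
  simp [dot2]; ring

lemma dot2_smul_left (v w : ℝ × ℝ) (r : ℝ) : dot2 (r • v) w = r * dot2 v w := by
  simp [dot2]; ring

/-- periodic + interval integrable on one period implies interval integrable everywhere -/
lemma Periodic.intervalIntegrable_all {v : ℝ → ℝ × ℝ} {T : ℝ} (hT : 0 < T)
    (hp : Function.Periodic v T) (hi : IntervalIntegrable v volume 0 T) :
    ∀ a b : ℝ, IntervalIntegrable v volume a b := by
  have hshift : ∀ n : ℤ, IntervalIntegrable v volume (n * T) (n * T + T) := by
    intro n
    have h2 : IntervalIntegrable (fun x => v (x + (-n * T))) volume (0 - (-n*T)) (T - (-n*T)) :=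
      IntervalIntegrable.comp_add_right hi (-n * T)
    have : (fun x => v (x + (-n * T))) = v := by
      funext x
      have := (hp.int_mul (-n)) x
      simpa [mul_comm] using this
    rw [this] at h2
    convert h2 using 1 <;> ring
  have hnat : ∀ n : ℕ, IntervalIntegrable v volume (-(n * T)) (n * T) := by
    intro n
    induction n with
    | zero => simp
    | succ n ih =>
      have hL : IntervalIntegrable v volume (-((n+1) * T)) (-(n * T)) := by
        have := hshift (-(n+1))
        convert this using 1 <;> push_cast <;> ring
      have hR : IntervalIntegrable v volume (n * T) ((n+1) * T) := by
        have := hshift n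
        convert this using 1 <;> push_cast <;> ring
      have := (hL.trans ih).trans hR
      convert this using 2 <;> push_cast <;> ring
  intro a b
  obtain ⟨n, hn⟩ := exists_nat_ge ((max |a| |b|) / T)
  have hnT : max |a| |b| ≤ n * T := by
    rw [div_le_iff₀ hT] at hn
    linarith
  refine (hnat n).mono_set ?_
  have h1 : -(n * T) ≤ min a b := by
    have := abs_nonneg a
    have h2 : |a| ≤ n*T := le_trans (le_max_left _ _) hnT
    have h3 : |b| ≤ n*T := le_trans (le_max_right _ _) hnT
    have := neg_abs_le a; have := neg_abs_le b
    simp only [le_min_iff]; constructor <;> linarith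
  have h2 : max a b ≤ n * T := by
    have h2 : |a| ≤ n*T := le_trans (le_max_left _ _) hnT
    have h3 : |b| ≤ n*T := le_trans (le_max_right _ _) hnT
    have := le_abs_self a; have := le_abs_self b
    simp only [max_le_iff]; constructor <;> linarith
  have hmem : ∀ x : ℝ, |x| ≤ n * T → x ∈ Set.uIcc (-(n*T)) ((n:ℝ)*T) := by
    intro x hx
    rw [Set.uIcc_of_le (by
      have hnn : (0:ℝ) ≤ n * T := by positivity
      linarith)]
    have := neg_abs_le x; have := le_abs_self x
    exact Set.mem_Icc.mpr ⟨by linarith, by linarith⟩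
  exact Set.uIcc_subset_uIcc (hmem a (le_trans (le_max_left _ _) hnT))
    (hmem b (le_trans (le_max_right _ _) hnT))
section Periodize
open Set

variable {E : Type*} [NormedAddCommGroup E] [NormedSpace ℝ E]

/-- Periodization of a function defined on `[0,T)`. -/
noncomputable def pz (T : ℝ) [hT : Fact (0 < T)] (f : ℝ → E) : ℝ → E :=
  fun t => AddCircle.liftIco T 0 f ↑t

variable {T : ℝ} [hT : Fact (0 < T)] {f : ℝ → E}

lemma pz_periodic : Function.Periodic (pz T f) T := by
  intro t
  unfold pz
  rw [AddCircle.coe_add_period]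

lemma pz_eq_of_mem {t : ℝ} (ht : t ∈ Ico 0 T) : pz T f t = f t := by
  unfold pz
  exact AddCircle.liftIco_coe_apply (by simpa using ht)

lemma pz_apply (t : ℝ) : pz T f t = f (t - T * ⌊t / T⌋) := by
  have h1 : t - T * ⌊t / T⌋ ∈ Ico 0 T := by
    constructor
    · have := Int.sub_floor_div_mul_nonneg t hT.out
      linarith [Int.sub_floor_div_mul_nonneg t hT.out]
    · have := Int.sub_floor_div_mul_lt t hT.out
      linarith [Int.sub_floor_div_mul_lt t hT.out]
  have h2 : pz T f t = pz T f (t - T * ⌊t / T⌋) := by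
    have := (pz_periodic (T := T) (f := f)).sub_int_mul_eq (x := t) (n := ⌊t / T⌋)
    rw [← this]; ring_nf
  rw [h2, pz_eq_of_mem h1]

lemma pz_continuous (h0 : f 0 = f T) (hc : ContinuousOn f (Icc 0 T)) :
    Continuous (pz T f) := by
  apply Continuous.comp
  · exact AddCircle.liftIco_continuous (by simpa using h0) (by simpa using hc)
  · exact AddCircle.continuous_mk' T

/-- periodization of a `C¹` function supported in a compact subinterval of `(0,T)` is `C¹`. -/
lemma pz_contDiff {m M : ℝ} (hm : 0 < m) (hM : M < T)
    (hf : ContDiff ℝ 1 f) (hsupp : ∀ t, t ∉ Icc m M → f t = 0) :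
    ContDiff ℝ 1 (pz T f) := by
  have hT0 := hT.out
  rw [contDiff_iff_contDiffAt]
  intro t
  set n : ℤ := ⌊t / T⌋ with hn
  set δ : ℝ := t - T * n with hδ
  have hδ0 : 0 ≤ δ := by
    have := Int.sub_floor_div_mul_nonneg t hT0; rw [hδ, hn]; linarith [Int.sub_floor_div_mul_nonneg t hT0]
  have hδT : δ < T := by
    have := Int.sub_floor_div_mul_lt t hT0; rw [hδ, hn]; linarith [Int.sub_floor_div_mul_lt t hT0]
  rcases eq_or_lt_of_le hδ0 with h0 | h0
  · -- t = T * n : pz is 0 near t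
    have ht : t = T * n := by rw [hδ] at h0; linarith
    set r : ℝ := min (min m (T - M)) (T/2) with hr
    have hr0 : 0 < r := lt_min (lt_min hm (by linarith)) (by linarith)
    have hrm : r ≤ m := le_trans (min_le_left _ _) (min_le_left _ _)
    have hrM : r ≤ T - M := le_trans (min_le_left _ _) (min_le_right _ _)
    have hrT : r ≤ T/2 := min_le_right _ _
    have hev : ∀ s ∈ Metric.ball t r, pz T f s = 0 := by
      intro s hs
      rw [Metric.mem_ball, Real.dist_eq, abs_lt] at hs
      rw [pz_apply]
      rcases le_or_gt t s with hge | hlt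
      · have hfl : ⌊s / T⌋ = n := by
          apply Int.floor_eq_iff.mpr
          constructor
          · rw [le_div_iff₀ hT0, mul_comm]; linarith [ht ▸ hge]
          · rw [div_lt_iff₀ hT0]; push_cast; nlinarith [hs.2, ht ▸ hge]
        apply hsupp
        rw [hfl]
        intro hmem
        have : s - T * n < m := by rw [← ht]; linarith [hs.2]
        linarith [hmem.1]
      · have hfl : ⌊s / T⌋ = n - 1 := by
          apply Int.floor_eq_iff.mpr
          constructor
          · rw [le_div_iff₀ hT0]; push_cast; nlinarith [hs.1]
          · rw [div_lt_iff₀ hT0]; push_cast; nlinarith [hlt]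
        apply hsupp
        rw [hfl]
        intro hmem
        have : s - T * ((n:ℝ) - 1) > M := by push_cast; nlinarith [hs.1]
        push_cast at hmem this
        linarith [hmem.2]
    have : pz T f =ᶠ[nhds t] (fun _ => (0:E)) :=
      Filter.eventuallyEq_of_mem (Metric.ball_mem_nhds t hr0) hev
    exact (contDiffAt_const (c := (0:E))).congr_of_eventuallyEq this
  · -- δ ∈ (0,T) : pz agrees with a translate of f near t
    set r : ℝ := min δ (T - δ) with hr
    have hr0 : 0 < r := lt_min h0 (by linarith)
    have hev : ∀ s ∈ Metric.ball t r, pz T f s = f (s - T * n) := by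
      intro s hs
      rw [Metric.mem_ball, Real.dist_eq, abs_lt] at hs
      have hfl : ⌊s / T⌋ = n := by
        apply Int.floor_eq_iff.mpr
        have h1 : r ≤ δ := min_le_left _ _
        have h2 : r ≤ T - δ := min_le_right _ _
        constructor
        · rw [le_div_iff₀ hT0]; push_cast; rw [hδ] at h1; linarith [hs.1]
        · rw [div_lt_iff₀ hT0]; push_cast; rw [hδ] at h2; linarith [hs.2]
      rw [pz_apply, hfl]
    have heq : pz T f =ᶠ[nhds t] (fun s => f (s - T * n)) :=
      Filter.eventuallyEq_of_mem (Metric.ball_mem_nhds t hr0) hev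
    have hcd : ContDiffAt ℝ 1 (fun s : ℝ => f (s - T * n)) t :=
      (hf.comp (contDiff_id.sub contDiff_const)).contDiffAt
    exact hcd.congr_of_eventuallyEq heq

lemma pz_eventuallyEq_of_mem_Ioo {t : ℝ} (ht : t ∈ Ioo 0 T) :
    pz T f =ᶠ[nhds t] f := by
  have hball : Metric.ball t (min t (T - t)) ⊆ Ioo 0 T := by
    intro s hs
    rw [Metric.mem_ball, Real.dist_eq, abs_lt] at hs
    have h1 : min t (T-t) ≤ t := min_le_left _ _
    have h2 : min t (T-t) ≤ T - t := min_le_right _ _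
    exact ⟨by linarith [hs.1], by linarith [hs.2]⟩
  have hr0 : 0 < min t (T - t) := lt_min ht.1 (by linarith [ht.2])
  refine Filter.eventuallyEq_of_mem (Metric.ball_mem_nhds t hr0) ?_
  intro s hs
  exact pz_eq_of_mem (Ioo_subset_Ico_self (hball hs))

lemma pz_deriv_of_mem_Ioo {t : ℝ} (ht : t ∈ Ioo 0 T) :
    deriv (pz T f) t = deriv f t :=
  (pz_eventuallyEq_of_mem_Ioo ht).deriv_eq

end Periodize
section DBR
open Set

lemma dbr0 {T : ℝ} (hT : 0 < T) (h : ℝ → ℝ) (hint : IntegrableOn h (Set.Ioo 0 T))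
    (hyp : ∀ g : ℝ → ℝ, ContDiff ℝ (⊤ : ℕ∞) g → HasCompactSupport g → tsupport g ⊆ Set.Ioo 0 T →
      ∫ t in Set.Ioo 0 T, deriv g t * h t = 0) :
    ∃ k : ℝ, ∀ᵐ t : ℝ, t ∈ Set.Ioo 0 T → h t = k := by
  set χb : ContDiffBump (T/2) := ⟨T/4, T/3, by positivity, by linarith⟩ with hχb
  set χ : ℝ → ℝ := χb.normed volume with hχdef
  have hχs : ContDiff ℝ (⊤ : ℕ∞) χ := χb.contDiff_normed
  have hχc : Continuous χ := hχs.continuous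
  have hχsupp : tsupport χ = Metric.closedBall (T/2) (T/3) := χb.tsupport_normed_eq
  have hχsub : tsupport χ ⊆ Set.Ioo 0 T := by
    rw [hχsupp, Real.closedBall_eq_Icc]
    intro x hx
    have h1 := hx.1; have h2 := hx.2
    constructor <;> [linarith; linarith]
  have hχcompact : HasCompactSupport χ := χb.hasCompactSupport_normed
  have hχint : ∫ x, χ x = 1 := χb.integral_normed
  set k : ℝ := ∫ t in Set.Ioo 0 T, χ t * h t with hk
  have main : ∀ (g : ℝ → ℝ), ContDiff ℝ (⊤ : ℕ∞) g → HasCompactSupport g →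
      tsupport g ⊆ Set.Ioo 0 T → ∫ x : ℝ, g x • (h x - k) = 0 := by
    intro g hgs hgcs hgsub
    have hgc : Continuous g := hgs.continuous
    -- bounds of the support
    set K : Set ℝ := tsupport g ∪ tsupport χ with hK
    have hKne : K.Nonempty := ⟨T/2, Or.inr (hχsupp ▸ Metric.mem_closedBall_self (by linarith))⟩
    have hKcompact : IsCompact K := hgcs.union hχcompact
    have hKsub : K ⊆ Set.Ioo 0 T := Set.union_subset hgsub hχsub
    set m : ℝ := sInf K with hm
    set M : ℝ := sSup K with hM
    have hmK : m ∈ K := hKcompact.sInf_mem hKne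
    have hMK : M ∈ K := hKcompact.sSup_mem hKne
    have hm0 : 0 < m := (hKsub hmK).1
    have hMT : M < T := (hKsub hMK).2
    have hM0 : 0 < M := (hKsub hMK).1
    have hmM : m ≤ M := csInf_le_csSup hKne hKcompact.bddBelow hKcompact.bddAbove
    have hKIcc : K ⊆ Set.Icc m M := fun x hx =>
      ⟨csInf_le hKcompact.bddBelow hx, le_csSup hKcompact.bddAbove hx⟩
    have vanish : ∀ s : ℝ, s ∉ Set.Icc m M → g s = 0 ∧ χ s = 0 := by
      intro s hs
      have hsK : s ∉ K := fun hc => hs (hKIcc hc)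
      exact ⟨image_eq_zero_of_notMem_tsupport (fun hc => hsK (Or.inl hc)),
        image_eq_zero_of_notMem_tsupport (fun hc => hsK (Or.inr hc))⟩
    set r : ℝ := ∫ x : ℝ, g x with hr
    set ψ : ℝ → ℝ := fun s => g s - r * χ s with hψ
    have hψc : Continuous ψ := hgc.sub (continuous_const.mul hχc)
    have hψs : ContDiff ℝ (⊤ : ℕ∞) ψ := hgs.sub (contDiff_const.mul hχs)
    have hψvanish : ∀ s : ℝ, s ∉ Set.Icc m M → ψ s = 0 := by
      intro s hs
      obtain ⟨h1, h2⟩ := vanish s hs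
      simp [hψ, h1, h2]
    set G : ℝ → ℝ := fun t => ∫ s in (0:ℝ)..t, ψ s with hG
    have hGd : ∀ t : ℝ, HasDerivAt G (ψ t) t :=
      fun t => (hψc.integral_hasStrictDerivAt 0 t).hasDerivAt
    have hGderiv : deriv G = ψ := funext fun t => (hGd t).deriv
    have hGsmooth : ContDiff ℝ (⊤ : ℕ∞) G := by
      rw [contDiff_infty_iff_deriv]
      exact ⟨fun t => (hGd t).differentiableAt, hGderiv ▸ hψs⟩
    set m' : ℝ := m/2 with hm'
    set M' : ℝ := (M + T)/2 with hM'
    have hm'0 : 0 < m' := by positivity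
    have hm'm : m' < m := by rw [hm']; linarith
    have hMM' : M < M' := by rw [hM']; linarith
    have hM'T : M' < T := by rw [hM']; linarith
    have hGleft : ∀ t : ℝ, t ≤ m' → G t = 0 := by
      intro t ht
      have : Set.EqOn ψ (fun _ => (0:ℝ)) (Set.uIcc 0 t) := by
        intro s hs
        refine hψvanish s (fun hc => ?_)
        have hsle : s ≤ max 0 t := (Set.mem_uIcc.mp hs).elim (fun h => le_trans h.2 (le_max_right _ _)) (fun h => le_trans h.2 (le_max_left _ _))
        have : max 0 t ≤ m' := max_le hm'0.le ht
        have := hc.1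
        linarith
      show (∫ s in (0:ℝ)..t, ψ s) = 0
      calc ∫ s in (0:ℝ)..t, ψ s = ∫ _ in (0:ℝ)..t, (0:ℝ) := intervalIntegral.integral_congr this
      _ = 0 := intervalIntegral.integral_zero
    have hGM' : G M' = 0 := by
      show (∫ s in (0:ℝ)..M', ψ s) = 0
      have h1 : ∫ s in (0:ℝ)..M', ψ s = ∫ s in Set.Ioc 0 M', ψ s :=
        intervalIntegral.integral_of_le (by linarith)
      have h2 : ∫ s in Set.Ioc 0 M', ψ s = ∫ s : ℝ, ψ s := by
        apply MeasureTheory.setIntegral_eq_integral_of_forall_compl_eq_zero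
        intro x hx
        refine hψvanish x (fun hc => hx ?_)
        exact ⟨lt_of_lt_of_le hm0 hc.1, le_trans hc.2 hMM'.le⟩
      have h3 : ∫ s : ℝ, ψ s = 0 := by
        rw [hψ]
        rw [MeasureTheory.integral_sub (hgc.integrable_of_hasCompactSupport hgcs)
          ((χb.integrable_normed).const_mul r)]
        rw [MeasureTheory.integral_const_mul, ← hχdef, hχint, ← hr]
        ring
      rw [h1, h2, h3]
    have hGright : ∀ t : ℝ, M' ≤ t → G t = 0 := by
      intro t ht
      have hadd : (∫ s in (0:ℝ)..M', ψ s) + ∫ s in M'..t, ψ s = ∫ s in (0:ℝ)..t, ψ s :=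
        intervalIntegral.integral_add_adjacent_intervals
          (hψc.intervalIntegrable 0 M') (hψc.intervalIntegrable M' t)
      have hz : ∫ s in M'..t, ψ s = 0 := by
        have : Set.EqOn ψ (fun _ => (0:ℝ)) (Set.uIcc M' t) := by
          intro s hs
          refine hψvanish s (fun hc => ?_)
          have hsge : min M' t ≤ s := ((Set.mem_uIcc.mp hs).elim (fun h => le_trans (min_le_left _ _) h.1)
            (fun h => le_trans (min_le_right _ _) h.1))
          have : M' ≤ min M' t := le_min le_rfl ht
          have := hc.2
          linarith
        calc ∫ s in M'..t, ψ s = ∫ _ in M'..t, (0:ℝ) := intervalIntegral.integral_congr this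
        _ = 0 := intervalIntegral.integral_zero
      show (∫ s in (0:ℝ)..t, ψ s) = 0
      have h5 : G M' = (∫ s in (0:ℝ)..M', ψ s) := rfl
      rw [← hadd, ← h5, hGM', hz, add_zero]
    have hGsupp0 : ∀ x : ℝ, x ∉ Set.Icc m' M' → G x = 0 := by
      intro x hx
      rcases not_and_or.mp (fun hc => hx (Set.mem_Icc.mpr hc)) with h1 | h1
      · exact hGleft x (le_of_not_ge h1)
      · exact hGright x (le_of_not_ge h1)
    have hGcs : HasCompactSupport G := HasCompactSupport.intro isCompact_Icc hGsupp0
    have hGsub : tsupport G ⊆ Set.Ioo 0 T := by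
      have h1 : Function.support G ⊆ Set.Icc m' M' := by
        intro x hx
        by_contra hc
        exact hx (hGsupp0 x hc)
      refine le_trans (closure_minimal h1 isClosed_Icc) ?_
      intro x hx
      exact ⟨lt_of_lt_of_le hm'0 hx.1, lt_of_le_of_lt hx.2 hM'T⟩
    -- apply the hypothesis to G
    have hkey := hyp G hGsmooth hGcs hGsub
    rw [hGderiv] at hkey
    -- integrability facts
    obtain ⟨Cg, hCg⟩ := hgc.bounded_above_of_compact_support hgcs
    obtain ⟨Cχ, hCχ⟩ := hχc.bounded_above_of_compact_support hχcompact
    have hgh : MeasureTheory.Integrable (fun t => g t * h t)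
        (MeasureTheory.volume.restrict (Set.Ioo 0 T)) :=
      hint.bdd_mul hgc.aestronglyMeasurable (Filter.Eventually.of_forall hCg)
    have hχh : MeasureTheory.Integrable (fun t => χ t * h t)
        (MeasureTheory.volume.restrict (Set.Ioo 0 T)) :=
      hint.bdd_mul hχc.aestronglyMeasurable (Filter.Eventually.of_forall hCχ)
    have hsplit : ∫ t in Set.Ioo 0 T, ψ t * h t
        = (∫ t in Set.Ioo 0 T, g t * h t) - r * ∫ t in Set.Ioo 0 T, χ t * h t := by
      have : (fun t => ψ t * h t) = fun t => g t * h t - r * (χ t * h t) := by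
        funext t; rw [hψ]; ring
      rw [this, MeasureTheory.integral_sub hgh (hχh.const_mul r), MeasureTheory.integral_const_mul]
    have hghk : ∫ t in Set.Ioo 0 T, g t * h t = r * k := by
      rw [hsplit, ← hk] at hkey
      linarith [hkey]
    have h0 : ∀ x : ℝ, x ∉ Set.Ioo 0 T → g x • (h x - k) = 0 := by
      intro x hx
      have : g x = 0 := image_eq_zero_of_notMem_tsupport (fun hc => hx (hgsub hc))
      simp [this]
    rw [← MeasureTheory.setIntegral_eq_integral_of_forall_compl_eq_zero h0]
    simp only [smul_eq_mul]
    have hsplit2 : ∫ x in Set.Ioo 0 T, g x * (h x - k)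
        = (∫ x in Set.Ioo 0 T, g x * h x) - (∫ x in Set.Ioo 0 T, g x) * k := by
      have heq : (fun x => g x * (h x - k)) = fun x => g x * h x - g x * k := by
        funext x; ring
      rw [heq, MeasureTheory.integral_sub hgh
        (((hgc.integrable_of_hasCompactSupport hgcs).restrict).mul_const k),
        MeasureTheory.integral_mul_const]
    have hgIoo : ∫ x in Set.Ioo 0 T, g x = r :=
      MeasureTheory.setIntegral_eq_integral_of_forall_compl_eq_zero
        (fun x hx => image_eq_zero_of_notMem_tsupport (fun hc => hx (hgsub hc)))
    rw [hsplit2, hghk, hgIoo]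
    ring
  have hIntOn : IntegrableOn (fun t => h t - k) (Set.Ioo 0 T) volume :=
    hint.sub (integrableOn_const measure_Ioo_lt_top.ne)
  have hloc : MeasureTheory.LocallyIntegrableOn (fun t => h t - k) (Set.Ioo 0 T) volume :=
    fun x _ => ⟨Set.Ioo 0 T, self_mem_nhdsWithin, hIntOn⟩
  have hae := isOpen_Ioo.ae_eq_zero_of_integral_contDiff_smul_eq_zero hloc main
  refine ⟨k, ?_⟩
  filter_upwards [hae] with t ht hmem
  have := ht hmem
  linarith [this]
end DBR
section DBR1
open Set MeasureTheory

lemma dbr1 {T : ℝ} (hT : 0 < T) (f α : ℝ → ℝ)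
    (hf : IntegrableOn f (Set.Ioo 0 T))
    (hα : ∀ a b : ℝ, IntervalIntegrable α volume a b)
    (hyp : ∀ g : ℝ → ℝ, ContDiff ℝ (⊤ : ℕ∞) g → HasCompactSupport g → tsupport g ⊆ Set.Ioo 0 T →
      (∫ t in Set.Ioo 0 T, (deriv g t * f t + g t * α t)) = 0) :
    ∃ k : ℝ, ∀ᵐ t : ℝ, t ∈ Set.Ioo 0 T → f t = k + ∫ s in (0:ℝ)..t, α s := by
  set A : ℝ → ℝ := fun t => ∫ s in (0:ℝ)..t, α s with hA
  have hAcont : Continuous A := intervalIntegral.continuous_primitive hα 0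
  have hαIoo : IntegrableOn α (Set.Ioo 0 T) volume :=
    (intervalIntegrable_iff_integrableOn_Ioo_of_le hT.le).mp (hα 0 T)
  have one_le : (1 : WithTop ℕ∞) ≤ ((⊤ : ℕ∞) : WithTop ℕ∞) := by
    exact_mod_cast le_top
  -- Fubini identity for test functions
  have fub : ∀ g : ℝ → ℝ, ContDiff ℝ (⊤ : ℕ∞) g → HasCompactSupport g →
      tsupport g ⊆ Set.Ioo 0 T →
      ∫ t in Set.Ioo 0 T, g t * α t = ∫ t in Set.Ioo 0 T, deriv g t * (A T - A t) := by
    intro g hgs hgcs hgsub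
    have hgc : Continuous g := hgs.continuous
    have hg'c : Continuous (deriv g) := hgs.continuous_deriv one_le
    have hg'Ioo : IntegrableOn (deriv g) (Set.Ioo 0 T) volume :=
      (intervalIntegrable_iff_integrableOn_Ioo_of_le hT.le).mp (hg'c.intervalIntegrable 0 T)
    have hgderivAt : ∀ x : ℝ, HasDerivAt g (deriv g x) x :=
      fun x => ((hgs.differentiable (by simp)) x).hasDerivAt
    set F : ℝ → ℝ → ℝ := fun s t => Set.indicator (Set.Ioo 0 s) (fun t' => α s * deriv g t') t
      with hF
    set μ := volume.restrict (Set.Ioo 0 T) with hμ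
    have hFunc : Function.uncurry F = Set.indicator {p : ℝ × ℝ | 0 < p.2 ∧ p.2 < p.1}
        (fun p => α p.1 * deriv g p.2) := by
      funext p
      rcases p with ⟨s, t⟩
      simp only [Function.uncurry, hF, Set.indicator_apply, Set.mem_Ioo, Set.mem_setOf_eq]
    have hmeas : MeasurableSet {p : ℝ × ℝ | 0 < p.2 ∧ p.2 < p.1} :=
      ((isOpen_lt continuous_const continuous_snd).inter
        (isOpen_lt continuous_snd continuous_fst)).measurableSet
    have hFint : Integrable (Function.uncurry F) (μ.prod μ) := by
      rw [hFunc]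
      exact (Integrable.mul_prod hαIoo hg'Ioo).indicator hmeas
    have hswap : ∫ s, (∫ t, F s t ∂μ) ∂μ = ∫ t, (∫ s, F s t ∂μ) ∂μ :=
      integral_integral_swap hFint
    have hL : ∫ s, (∫ t, F s t ∂μ) ∂μ = ∫ s in Set.Ioo 0 T, g s * α s := by
      apply setIntegral_congr_fun measurableSet_Ioo
      intro s hs
      show (∫ t, F s t ∂μ) = g s * α s
      have h1 : ∫ t, F s t ∂μ = ∫ t in Set.Ioo 0 T ∩ Set.Ioo 0 s, α s * deriv g t :=
        setIntegral_indicator measurableSet_Ioo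
      have h2 : Set.Ioo 0 T ∩ Set.Ioo 0 s = Set.Ioo 0 s :=
        Set.inter_eq_self_of_subset_right (Set.Ioo_subset_Ioo_right hs.2.le)
      have h3 : ∫ t in Set.Ioo 0 s, deriv g t = g s := by
        have h4 : ∫ t in (0:ℝ)..s, deriv g t = g s - g 0 :=
          intervalIntegral.integral_deriv_eq_sub (fun x _ => (hgs.differentiable (by simp)) x)
            (hg'c.intervalIntegrable 0 s)
        have g0 : g 0 = 0 := image_eq_zero_of_notMem_tsupport
          (fun hc => lt_irrefl (0:ℝ) (hgsub hc).1)
        rw [intervalIntegral.integral_of_le hs.1.le, integral_Ioc_eq_integral_Ioo] at h4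
        rw [h4, g0, sub_zero]
      rw [h1, h2, MeasureTheory.integral_const_mul, h3]
      ring
    have hR : ∫ t, (∫ s, F s t ∂μ) ∂μ = ∫ t in Set.Ioo 0 T, deriv g t * (A T - A t) := by
      apply setIntegral_congr_fun measurableSet_Ioo
      intro t ht
      show (∫ s, F s t ∂μ) = deriv g t * (A T - A t)
      have h1 : (fun s => F s t) = Set.indicator (Set.Ioi t) (fun s => α s * deriv g t) := by
        funext s
        simp only [hF, Set.indicator_apply, Set.mem_Ioo, Set.mem_Ioi]
        by_cases hst : t < s
        · simp [hst, ht.1]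
        · simp [hst]
      have h2 : ∫ s, F s t ∂μ
          = ∫ s in Set.Ioo 0 T ∩ Set.Ioi t, α s * deriv g t := by
        rw [show (fun s => F s t) = _ from h1]
        exact setIntegral_indicator measurableSet_Ioi
      have h3 : Set.Ioo 0 T ∩ Set.Ioi t = Set.Ioo t T := by
        rw [Set.Ioo_inter_Ioi, max_eq_right ht.1.le]
      have h5 : ∫ s in Set.Ioo t T, α s = A T - A t := by
        have h6 : A t + (∫ s in t..T, α s) = A T :=
          intervalIntegral.integral_add_adjacent_intervals (hα 0 t) (hα t T)
        have h7 : ∫ s in t..T, α s = ∫ s in Set.Ioo t T, α s := by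
          rw [intervalIntegral.integral_of_le ht.2.le, integral_Ioc_eq_integral_Ioo]
        linarith
      rw [h2, h3, MeasureTheory.integral_mul_const, h5]
      ring
    rw [← hL, ← hR] at *
    rw [hswap, hR]
  -- reduce to the homogeneous lemma
  have hAIoo : IntegrableOn A (Set.Ioo 0 T) volume :=
    (intervalIntegrable_iff_integrableOn_Ioo_of_le hT.le).mp (hAcont.intervalIntegrable 0 T)
  have hyp0 : ∀ g : ℝ → ℝ, ContDiff ℝ (⊤ : ℕ∞) g → HasCompactSupport g →
      tsupport g ⊆ Set.Ioo 0 T →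
      ∫ t in Set.Ioo 0 T, deriv g t * (f t - A t) = 0 := by
    intro g hgs hgcs hgsub
    have hgc : Continuous g := hgs.continuous
    have hg'c : Continuous (deriv g) := hgs.continuous_deriv one_le
    have hcomb := hyp g hgs hgcs hgsub
    have hfubg := fub g hgs hgcs hgsub
    obtain ⟨Cg, hCg⟩ := hgc.bounded_above_of_compact_support hgcs
    obtain ⟨Cg', hCg'⟩ := hg'c.bounded_above_of_compact_support hgcs.deriv
    have h1 : Integrable (fun t => deriv g t * f t) (volume.restrict (Set.Ioo 0 T)) :=
      hf.bdd_mul hg'c.aestronglyMeasurable (Filter.Eventually.of_forall hCg')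
    have h2 : Integrable (fun t => g t * α t) (volume.restrict (Set.Ioo 0 T)) :=
      hαIoo.bdd_mul hgc.aestronglyMeasurable (Filter.Eventually.of_forall hCg)
    have h3 : Integrable (fun t => deriv g t * A t) (volume.restrict (Set.Ioo 0 T)) :=
      hAIoo.bdd_mul hg'c.aestronglyMeasurable (Filter.Eventually.of_forall hCg')
    have hsum : (∫ t in Set.Ioo 0 T, deriv g t * f t) + ∫ t in Set.Ioo 0 T, g t * α t = 0 := by
      rw [← integral_add h1 h2]
      exact hcomb
    have hdg0 : ∫ t in Set.Ioo 0 T, deriv g t = 0 := by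
      have h4 : ∫ t in (0:ℝ)..T, deriv g t = g T - g 0 :=
        intervalIntegral.integral_deriv_eq_sub
          (fun x _ => (hgs.differentiable (by simp)) x)
          (hg'c.intervalIntegrable 0 T)
      have g0 : g 0 = 0 := image_eq_zero_of_notMem_tsupport
        (fun hc => lt_irrefl (0:ℝ) (hgsub hc).1)
      have gT : g T = 0 := image_eq_zero_of_notMem_tsupport
        (fun hc => lt_irrefl T (hgsub hc).2)
      rw [intervalIntegral.integral_of_le hT.le, integral_Ioc_eq_integral_Ioo] at h4
      rw [h4, g0, gT, sub_zero]
    have hATA : ∫ t in Set.Ioo 0 T, deriv g t * (A T - A t)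
        = (∫ t in Set.Ioo 0 T, deriv g t) * A T - ∫ t in Set.Ioo 0 T, deriv g t * A t := by
      have heq : (fun t => deriv g t * (A T - A t))
          = fun t => deriv g t * A T - deriv g t * A t := by funext t; ring
      rw [heq, integral_sub (((intervalIntegrable_iff_integrableOn_Ioo_of_le hT.le).mp
        (hg'c.intervalIntegrable 0 T)).mul_const (A T)) h3, MeasureTheory.integral_mul_const]
    have heq2 : (fun t => deriv g t * (f t - A t))
        = fun t => deriv g t * f t - deriv g t * A t := by funext t; ring
    rw [heq2, integral_sub h1 h3]
    rw [hfubg, hATA, hdg0] at hsum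
    linarith
  obtain ⟨k, hk⟩ := dbr0 hT (fun t => f t - A t) (hf.sub hAIoo) hyp0
  refine ⟨k, ?_⟩
  filter_upwards [hk] with t ht hmem
  have := ht hmem
  rw [hA] at this
  simp only at this
  linarith
end DBR1

/-- A `W^{1,1}` loop of period `T` in the plane. -/
structure PLoop (T : ℝ) where
  toFun : ℝ → ℝ × ℝ
  deriv' : ℝ → ℝ × ℝ
  periodic : Function.Periodic toFun T
  periodic' : Function.Periodic deriv' T
  intIntegrable : IntervalIntegrable deriv' MeasureTheory.volume 0 T
  isIntegralOfDeriv : ∀ t : ℝ, toFun t = toFun 0 + ∫ s in (0:ℝ)..t, deriv' s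

/-- Regularity of critical points: if `u ∈ W^{1,1}(ℝ/Tℤ;ℝ²)` has `|u̇|` constant a.e.
and is a critical point of `𝓔_H(u) = ∫₀ᵀ |u̇| + ∫₀ᵀ Q_H(u)⬝iu̇` (the first variation
`∫₀ᵀ (u̇/|u̇|)⬝φ̇ + H(u) φ⬝iu̇ dt` vanishes for every periodic test function `φ`),
where `Q_H` is locally Lipschitz with `div Q_H = H` a.e., then `u ∈ C²` and
`ü = (T⁻¹∫₀ᵀ|u̇|) H(u) i u̇` pointwise. -/
theorem critical_point_regularity (T : ℝ) (hT : 0 < T)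
    (H : ℝ × ℝ → ℝ) (hH : Continuous H)
    (Q : ℝ × ℝ → ℝ × ℝ) (hQ : LocallyLipschitz Q)
    (Q' : ℝ × ℝ → ℝ × ℝ →L[ℝ] ℝ × ℝ)
    (hdiv : ∀ᵐ p : ℝ × ℝ, HasFDerivAt Q (Q' p) p ∧
      (Q' p (1, 0)).1 + (Q' p (0, 1)).2 = H p)
    (u : PLoop T)
    (hconst : ∃ c : ℝ, ∀ᵐ t : ℝ, nrm2 (u.deriv' t) = c)
    (hcrit : ∀ φ : ℝ → ℝ × ℝ, ContDiff ℝ 1 φ → Function.Periodic φ T →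
      (∫ t in (0:ℝ)..T, (dot2 (u.deriv' t) (deriv φ t) / nrm2 (u.deriv' t)
        + H (u.toFun t) * dot2 (φ t) (rot (u.deriv' t)))) = 0) :
    ContDiff ℝ 2 u.toFun ∧
      ∀ t : ℝ, deriv (deriv u.toFun) t
        = ((T⁻¹ * ∫ s in (0:ℝ)..T, nrm2 (u.deriv' s)) * H (u.toFun t))
            • rot (deriv u.toFun t) := by
  classical
  haveI : Fact (0 < T) := ⟨hT⟩
  obtain ⟨c, hc⟩ := hconst
  set v : ℝ → ℝ × ℝ := u.deriv' with hv
  have hvint : ∀ a b : ℝ, IntervalIntegrable v volume a b :=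
    Periodic.intervalIntegrable_all hT u.periodic' u.intIntegrable
  have hucont : Continuous u.toFun := by
    have h1 : u.toFun = fun t => u.toFun 0 + ∫ s in (0:ℝ)..t, v s := funext u.isIntegralOfDeriv
    rw [h1]
    exact continuous_const.add (intervalIntegral.continuous_primitive hvint 0)
  have one_le : (1 : WithTop ℕ∞) ≤ ((⊤ : ℕ∞) : WithTop ℕ∞) := by exact_mod_cast le_top
  have hc0 : 0 ≤ c := by
    obtain ⟨t, ht⟩ := hc.exists
    rw [← ht]
    exact Real.sqrt_nonneg _
  rcases hc0.eq_or_lt with hceq | hcpos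
  · -- degenerate case : the loop is constant
    have hv0 : ∀ᵐ t : ℝ, v t = 0 := by
      filter_upwards [hc] with t ht
      rw [← hceq] at ht
      have h1 : (v t).1 ^ 2 + (v t).2 ^ 2 ≤ 0 := Real.sqrt_eq_zero'.mp ht
      have h2 : (v t).1 = 0 := by nlinarith [sq_nonneg (v t).1, sq_nonneg (v t).2]
      have h3 : (v t).2 = 0 := by nlinarith [sq_nonneg (v t).1, sq_nonneg (v t).2]
      exact Prod.ext h2 h3
    have hfun : u.toFun = fun _ => u.toFun 0 := by
      funext t
      rw [u.isIntegralOfDeriv t]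
      have h1 : ∫ s in (0:ℝ)..t, v s = ∫ s in (0:ℝ)..t, (0:ℝ×ℝ) :=
        intervalIntegral.integral_congr_ae (by filter_upwards [hv0] with s hs _; exact hs)
      rw [h1]
      simp
    constructor
    · rw [hfun]; exact contDiff_const
    · intro t
      rw [hfun]
      have h1 : deriv (fun _ : ℝ => u.toFun 0) = fun _ : ℝ => (0 : ℝ × ℝ) := by
        funext s; exact deriv_const s _
      rw [h1]
      have h2 : deriv (fun _ : ℝ => (0:ℝ×ℝ)) t = 0 := deriv_const t _
      rw [h2]
      have h3 : rot 0 = 0 := by simp [rot, Prod.ext_iff]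
      rw [h3, smul_zero]
  ·
    -- main case : c > 0
    have hvIoo : MeasureTheory.IntegrableOn v (Set.Ioo 0 T) volume :=
      (intervalIntegrable_iff_integrableOn_Ioo_of_le hT.le).mp (hvint 0 T)
    have hvfst : ∀ a b : ℝ, IntervalIntegrable (fun t => (v t).1) volume a b :=
      fun a b => ⟨(hvint a b).1.fst, (hvint a b).2.fst⟩
    have hvsnd : ∀ a b : ℝ, IntervalIntegrable (fun t => (v t).2) volume a b :=
      fun a b => ⟨(hvint a b).1.snd, (hvint a b).2.snd⟩
    -- upgraded criticality for compactly supported C¹ variations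
    have key : ∀ (φ : ℝ → ℝ × ℝ) (m M : ℝ), 0 < m → M < T → ContDiff ℝ 1 φ →
        (∀ t, t ∉ Set.Icc m M → φ t = 0) →
        (∫ t in (0:ℝ)..T, (dot2 (v t) (deriv φ t) / nrm2 (v t)
          + H (u.toFun t) * dot2 (φ t) (rot (v t)))) = 0 := by
      intro φ m M hm hM hφ hsupp
      have hΦ := hcrit (pz T φ) (pz_contDiff hm hM hφ hsupp) pz_periodic
      refine Eq.trans ?_ hΦ
      apply intervalIntegral.integral_congr_ae
      have hTne : ∀ᵐ t : ℝ, t ≠ T := by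
        have h0 : volume ({T} : Set ℝ) = 0 := volume_singleton
        rw [MeasureTheory.ae_iff]
        convert h0 using 2
        ext x; simp
      filter_upwards [hTne] with t htne hmem
      rw [Set.uIoc_of_le hT.le] at hmem
      have htIoo : t ∈ Set.Ioo 0 T := ⟨hmem.1, lt_of_le_of_ne hmem.2 htne⟩
      rw [pz_deriv_of_mem_Ioo htIoo, pz_eq_of_mem (Set.Ioo_subset_Ico_self htIoo)]
    -- zero mean of the curvature term
    have hmean : ∀ e : ℝ × ℝ, (∫ t in (0:ℝ)..T, H (u.toFun t) * dot2 e (rot (v t))) = 0 := by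
      intro e
      have h1 := hcrit (fun _ => e) contDiff_const (fun t => rfl)
      refine Eq.trans ?_ h1
      apply intervalIntegral.integral_congr
      intro t _
      simp [dot2]
    -- the source terms
    set αe : (ℝ × ℝ) → ℝ → ℝ := fun e s => (c * H (u.toFun s)) * dot2 e (rot (v s)) with hαe
    have hαint : ∀ (e : ℝ × ℝ) (a b : ℝ), IntervalIntegrable (αe e) volume a b := by
      intro e a b
      have h1 : αe e = fun s => ((c * H (u.toFun s)) * e.1) * (-(v s).2)
          + ((c * H (u.toFun s)) * e.2) * (v s).1 := by
        funext s; rw [hαe]; simp only [dot2, rot]; ring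
      rw [h1]
      refine IntervalIntegrable.add ?_ ?_
      · exact ((hvsnd a b).neg).continuousOn_mul
          (((continuous_const.mul (hH.comp hucont)).mul continuous_const).continuousOn)
      · exact (hvfst a b).continuousOn_mul
          (((continuous_const.mul (hH.comp hucont)).mul continuous_const).continuousOn)
    have hα0 : ∀ e : ℝ × ℝ, (∫ s in (0:ℝ)..T, αe e s) = 0 := by
      intro e
      have h1 : ∀ s, αe e s = c * (H (u.toFun s) * dot2 e (rot (v s))) := by
        intro s; rw [hαe]; ring
      rw [intervalIntegral.integral_congr (fun s _ => h1 s),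
        intervalIntegral.integral_const_mul, hmean, mul_zero]
    -- the weak equation, componentwise
    have comp : ∀ e : ℝ × ℝ, ∃ k : ℝ, ∀ᵐ t : ℝ, t ∈ Set.Ioo 0 T →
        dot2 (v t) e = k + ∫ s in (0:ℝ)..t, αe e s := by
      intro e
      have hfint : MeasureTheory.IntegrableOn (fun t => dot2 (v t) e) (Set.Ioo 0 T) volume := by
        have h1 : (fun t => dot2 (v t) e) = fun t => (v t).1 * e.1 + (v t).2 * e.2 := rfl
        rw [h1]
        exact (hvIoo.fst.mul_const e.1).add (hvIoo.snd.mul_const e.2)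
      apply dbr1 hT _ _ hfint (hαint e)
      intro g hgs hgcs hgsub
      have hgc : Continuous g := hgs.continuous
      rcases Set.eq_empty_or_nonempty (tsupport g) with hKe | hKne
      · have hg0 : g = fun _ => (0:ℝ) := by
          funext t
          exact image_eq_zero_of_notMem_tsupport (by rw [hKe]; exact Set.notMem_empty t)
        have hint0 : ∀ t : ℝ, deriv g t * dot2 (v t) e + g t * αe e t = 0 := by
          intro t
          rw [hg0]
          simp
        rw [MeasureTheory.setIntegral_congr_fun measurableSet_Ioo (fun t _ => hint0 t)]
        simp
      · -- support bounds
        set m : ℝ := sInf (tsupport g) with hm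
        set M : ℝ := sSup (tsupport g) with hM
        have hmK : m ∈ tsupport g := hgcs.sInf_mem hKne
        have hMK : M ∈ tsupport g := hgcs.sSup_mem hKne
        have hm0 : 0 < m := (hgsub hmK).1
        have hMT : M < T := (hgsub hMK).2
        have hKIcc : tsupport g ⊆ Set.Icc m M := fun x hx =>
          ⟨csInf_le hgcs.bddBelow hx, le_csSup hgcs.bddAbove hx⟩
        set φ : ℝ → ℝ × ℝ := fun t => g t • e with hφ
        have hφC : ContDiff ℝ 1 φ := (hgs.of_le one_le).smul contDiff_const
        have hφsupp : ∀ t, t ∉ Set.Icc m M → φ t = 0 := by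
          intro t ht
          have : g t = 0 := image_eq_zero_of_notMem_tsupport (fun hc => ht (hKIcc hc))
          rw [hφ]; simp [this]
        have E1 : ∫ t in (0:ℝ)..T, ((deriv g t * dot2 (v t) e) / c
            + g t * (H (u.toFun t) * dot2 e (rot (v t)))) = 0 := by
          refine Eq.trans ?_ (key φ m M hm0 hMT hφC hφsupp)
          apply intervalIntegral.integral_congr_ae
          filter_upwards [hc] with t ht _
          have hd : deriv φ t = deriv g t • e :=
            deriv_smul_const ((hgs.differentiable (by simp)) t) e
          rw [hd, dot2_smul_right, ht]
          have hl : dot2 (φ t) (rot (v t)) = g t * dot2 e (rot (v t)) := dot2_smul_left _ _ _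
          rw [hl]
          ring
        have E2 : ∫ t in (0:ℝ)..T, (deriv g t * dot2 (v t) e + g t * αe e t) = 0 := by
          have h1 : ∀ t : ℝ, deriv g t * dot2 (v t) e + g t * αe e t
              = c * ((deriv g t * dot2 (v t) e) / c
                + g t * (H (u.toFun t) * dot2 e (rot (v t)))) := by
            intro t
            rw [hαe]
            field_simp
          rw [intervalIntegral.integral_congr (fun t _ => h1 t),
            intervalIntegral.integral_const_mul, E1, mul_zero]
        rw [intervalIntegral.integral_of_le hT.le, MeasureTheory.integral_Ioc_eq_integral_Ioo] at E2
        exact E2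
    obtain ⟨k1, hk1⟩ := comp (1, 0)
    obtain ⟨k2, hk2⟩ := comp (0, 1)
    set w : ℝ → ℝ × ℝ := fun t =>
      (k1 + ∫ s in (0:ℝ)..t, αe (1,0) s, k2 + ∫ s in (0:ℝ)..t, αe (0,1) s) with hw
    have hwcont : Continuous w := by
      apply Continuous.prodMk
      · exact continuous_const.add (intervalIntegral.continuous_primitive (hαint (1,0)) 0)
      · exact continuous_const.add (intervalIntegral.continuous_primitive (hαint (0,1)) 0)
    have hw0T : w 0 = w T := by
      show (k1 + ∫ s in (0:ℝ)..(0:ℝ), αe (1,0) s, k2 + ∫ s in (0:ℝ)..(0:ℝ), αe (0,1) s)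
        = (k1 + ∫ s in (0:ℝ)..T, αe (1,0) s, k2 + ∫ s in (0:ℝ)..T, αe (0,1) s)
      rw [hα0 (1,0), hα0 (0,1)]
      simp
    have hvw : ∀ᵐ t : ℝ, t ∈ Set.Ioo 0 T → v t = w t := by
      filter_upwards [hk1, hk2] with t h1 h2 hmem
      have e1 := h1 hmem
      have e2 := h2 hmem
      have d1 : dot2 (v t) (1,0) = (v t).1 := by simp [dot2]
      have d2 : dot2 (v t) (0,1) = (v t).2 := by simp [dot2]
      rw [d1] at e1
      rw [d2] at e2
      exact Prod.ext e1 e2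
    set W : ℝ → ℝ × ℝ := pz T w with hW
    have hWIco : ∀ t ∈ Set.Ico 0 T, W t = w t := fun t ht => pz_eq_of_mem ht
    have hWper : Function.Periodic W T := pz_periodic
    have hWcont : Continuous W := pz_continuous hw0T hwcont.continuousOn
    have hglobal : ∀ᵐ t : ℝ, v t = W t := by
      have hb : ∀ᵐ t : ℝ, t ∈ Set.Ioo 0 T → v t = W t := by
        filter_upwards [hvw] with t h1 hmem
        rw [hWIco t (Set.Ioo_subset_Ico_self hmem)]
        exact h1 hmem
      have hn : ∀ n : ℤ, ∀ᵐ t : ℝ, (t - n * T ∈ Set.Ioo 0 T → v t = W t) := by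
        intro n
        have hmp := MeasureTheory.measurePreserving_sub_right volume ((n:ℝ) * T)
        have h2 : ∀ᵐ t : ℝ, (t - n * T ∈ Set.Ioo 0 T → v (t - n * T) = W (t - n * T)) :=
          hmp.quasiMeasurePreserving.ae hb
        filter_upwards [h2] with t h3 hmem
        have hv' : v (t - n * T) = v t := u.periodic'.sub_int_mul_eq n
        have hW' : W (t - n * T) = W t := hWper.sub_int_mul_eq n
        rw [← hv', ← hW']
        exact h3 hmem
      have hni : ∀ᵐ t : ℝ, t ∉ Set.range (fun n : ℤ => (n : ℝ) * T) := by
        have hcount : (Set.range (fun n : ℤ => (n : ℝ) * T)).Countable := Set.countable_range _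
        have h0 := hcount.measure_zero volume
        rw [MeasureTheory.ae_iff]
        convert h0 using 2
        ext x
        simp
      filter_upwards [MeasureTheory.ae_all_iff.mpr hn, hni] with t h1 h2
      apply h1 ⌊t / T⌋
      constructor
      · rcases (Int.sub_floor_div_mul_nonneg t hT).eq_or_lt with h3 | h3
        · exact absurd (Set.mem_range.mpr ⟨⌊t / T⌋, by linarith⟩) h2
        · exact h3
      · have := Int.sub_floor_div_mul_lt t hT
        linarith
    have huW : u.toFun = fun t => u.toFun 0 + ∫ s in (0:ℝ)..t, W s := by
      funext t
      rw [u.isIntegralOfDeriv t]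
      congr 1
      exact intervalIntegral.integral_congr_ae
        (by filter_upwards [hglobal] with s hs _; exact hs)
    have hud : ∀ t : ℝ, HasDerivAt u.toFun (W t) t := by
      intro t
      have h1 : HasDerivAt (fun t => u.toFun 0 + ∫ s in (0:ℝ)..t, W s) (W t) t :=
        ((hWcont.integral_hasStrictDerivAt 0 t).hasDerivAt).const_add (u.toFun 0)
      rw [huW]
      exact h1
    have hderiv1 : deriv u.toFun = W := funext fun t => (hud t).deriv
    -- the ODE satisfied by W
    set βe : (ℝ × ℝ) → ℝ → ℝ := fun e s => (c * H (u.toFun s)) * dot2 e (rot (W s)) with hβe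
    have hβcont : ∀ e : ℝ × ℝ, Continuous (βe e) := by
      intro e
      have h1 : βe e = fun s => (c * H (u.toFun s)) * (e.1 * (-(W s).2) + e.2 * (W s).1) := by
        funext s
        rw [hβe]
        simp [dot2, rot]
      rw [h1]
      exact (continuous_const.mul (hH.comp hucont)).mul
        ((continuous_const.mul (hWcont.snd.neg)).add (continuous_const.mul hWcont.fst))
    have hβαae : ∀ e : ℝ × ℝ, ∀ᵐ s : ℝ, βe e s = αe e s := by
      intro e
      filter_upwards [hglobal] with s hs
      rw [hβe, hαe]
      simp only
      rw [hs]
    have hβint : ∀ (e : ℝ × ℝ) (a b : ℝ), IntervalIntegrable (βe e) volume a b :=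
      fun e a b => (hβcont e).intervalIntegrable a b
    have hβper : ∀ e : ℝ × ℝ, Function.Periodic (βe e) T := by
      intro e t
      rw [hβe]
      simp only
      rw [u.periodic t, hWper t]
    have hβ0 : ∀ e : ℝ × ℝ, (∫ s in (0:ℝ)..T, βe e s) = 0 := by
      intro e
      rw [intervalIntegral.integral_congr_ae
        (by filter_upwards [hβαae e] with s hs _; exact hs)]
      exact hα0 e
    set Wf : ℝ → ℝ × ℝ := fun t =>
      (k1 + ∫ s in (0:ℝ)..t, βe (1,0) s, k2 + ∫ s in (0:ℝ)..t, βe (0,1) s) with hWf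
    have hWfper : Function.Periodic Wf T := by
      intro t
      have hcomp2 : ∀ e : ℝ × ℝ, (∫ s in (0:ℝ)..(t+T), βe e s) = ∫ s in (0:ℝ)..t, βe e s := by
        intro e
        have h1 : (∫ s in (0:ℝ)..t, βe e s) + (∫ s in t..(t+T), βe e s)
            = ∫ s in (0:ℝ)..(t+T), βe e s :=
          intervalIntegral.integral_add_adjacent_intervals (hβint e 0 t) (hβint e t (t+T))
        have h2 : (∫ s in t..(t+T), βe e s) = ∫ s in (0:ℝ)..(0+T), βe e s :=
          (hβper e).intervalIntegral_add_eq t 0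
        rw [zero_add] at h2
        rw [← h1, h2, hβ0 e, add_zero]
      show (k1 + ∫ s in (0:ℝ)..(t+T), βe (1,0) s, k2 + ∫ s in (0:ℝ)..(t+T), βe (0,1) s)
        = (k1 + ∫ s in (0:ℝ)..t, βe (1,0) s, k2 + ∫ s in (0:ℝ)..t, βe (0,1) s)
      rw [hcomp2 (1,0), hcomp2 (0,1)]
    have hWWf : ∀ t : ℝ, W t = Wf t := by
      have hIco : ∀ t ∈ Set.Ico 0 T, W t = Wf t := by
        intro t ht
        rw [hWIco t ht]
        show (k1 + ∫ s in (0:ℝ)..t, αe (1,0) s, k2 + ∫ s in (0:ℝ)..t, αe (0,1) s)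
          = (k1 + ∫ s in (0:ℝ)..t, βe (1,0) s, k2 + ∫ s in (0:ℝ)..t, βe (0,1) s)
        have hint2 : ∀ e : ℝ × ℝ, (∫ s in (0:ℝ)..t, αe e s) = ∫ s in (0:ℝ)..t, βe e s :=
          fun e => intervalIntegral.integral_congr_ae
            (by filter_upwards [hβαae e] with s hs _; exact hs.symm)
        rw [hint2 (1,0), hint2 (0,1)]
      intro t
      have h1 : W (t - ⌊t / T⌋ * T) = W t := hWper.sub_int_mul_eq ⌊t / T⌋
      have h2 : Wf (t - ⌊t / T⌋ * T) = Wf t := hWfper.sub_int_mul_eq ⌊t / T⌋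
      rw [← h1, ← h2]
      exact hIco _ ⟨Int.sub_floor_div_mul_nonneg t hT, Int.sub_floor_div_mul_lt t hT⟩
    set β : ℝ → ℝ × ℝ := fun t => (βe (1,0) t, βe (0,1) t) with hβ
    have hWd : ∀ t : ℝ, HasDerivAt W (β t) t := by
      intro t
      have h1 : HasDerivAt (fun t => k1 + ∫ s in (0:ℝ)..t, βe (1,0) s) (βe (1,0) t) t :=
        (((hβcont (1,0)).integral_hasStrictDerivAt 0 t).hasDerivAt).const_add k1
      have h2 : HasDerivAt (fun t => k2 + ∫ s in (0:ℝ)..t, βe (0,1) s) (βe (0,1) t) t :=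
        (((hβcont (0,1)).integral_hasStrictDerivAt 0 t).hasDerivAt).const_add k2
      have h3 : HasDerivAt Wf (βe (1,0) t, βe (0,1) t) t := h1.prodMk h2
      rw [show W = Wf from funext hWWf]
      exact h3
    have hderiv2 : deriv W = β := funext fun t => (hWd t).deriv
    have hβc : Continuous β := (hβcont (1,0)).prodMk (hβcont (0,1))
    constructor
    · have hC1W : ContDiff ℝ 1 W := by
        rw [contDiff_one_iff_deriv]
        exact ⟨fun t => (hWd t).differentiableAt, hderiv2 ▸ hβc⟩
      have h2 : (2 : WithTop ℕ∞) = 1 + 1 := by norm_num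
      rw [h2, contDiff_succ_iff_deriv]
      refine ⟨fun t => (hud t).differentiableAt, by simp, ?_⟩
      rw [hderiv1]
      exact hC1W
    · intro t
      have hcT : (T⁻¹ * ∫ s in (0:ℝ)..T, nrm2 (u.deriv' s)) = c := by
        have h1 : ∫ s in (0:ℝ)..T, nrm2 (v s) = ∫ s in (0:ℝ)..T, c :=
          intervalIntegral.integral_congr_ae (by filter_upwards [hc] with s hs _; exact hs)
        rw [h1, intervalIntegral.integral_const, smul_eq_mul]
        field_simp
        ring
      rw [hderiv1, hderiv2, hcT]
      show (βe (1,0) t, βe (0,1) t) = (c * H (u.toFun t)) • rot (W t)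
      rw [hβe]
      apply Prod.ext
      · simp [dot2, rot, smul_eq_mul]
      · simp [dot2, rot, smul_eq_mul]
end

section
/- Let $Q:\mathbb{R}^2\times\mathbb{R}^2 \to \mathbb{R}$ be continuous with $Q(p,q) \le m_2 |q|^2$ and $Q(p,\lambda q) = \lambda^2 Q(p,q)$ for all $\lambda > 0$. Let $\mathcal{C} \subset H^1(\mathbb{R}/\mathbb{Z};\mathbb{R}^2)$ be a class invariant under admissible parameter variations. If $u \in \mathcal{C}$ minimizes $\mathcal{Q}(u) = \int_0^1 Q(u,\dot u)\,dt$ over $\mathcal{C}$, then there exists $h \in \mathbb{R}$ such that $Q(u(t),\dot u(t)) = h$ for almost every $t \in [0,1]$. -/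
open MeasureTheory Real intervalIntegral

set_option maxHeartbeats 1000000

/-- An admissible parameter variation: a family `ξ(ε,·) : [0,1] → [0,1]`,
`ε ∈ (-ε₀, ε₀)`, of `C¹` diffeomorphisms fixing the endpoints, with `ξ(0,t) = t`
and `∂_ε ξ(·,ε) ∈ C¹`. -/
def IsAdmissibleVariation (ε₀ : ℝ) (ξ : ℝ → ℝ → ℝ) : Prop :=
  0 < ε₀ ∧
  (∀ ε ∈ Set.Ioo (-ε₀) ε₀,
      ContDiff ℝ 1 (ξ ε) ∧ Set.BijOn (ξ ε) (Set.Icc 0 1) (Set.Icc 0 1) ∧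
      ∀ t ∈ Set.Icc (0:ℝ) 1, 0 < deriv (ξ ε) t) ∧
  (∀ ε ∈ Set.Ioo (-ε₀) ε₀, ξ ε 0 = 0 ∧ ξ ε 1 = 1) ∧
  (∀ t : ℝ, ξ 0 t = t) ∧
  (∀ ε ∈ Set.Ioo (-ε₀) ε₀, ContDiff ℝ 1 fun t => deriv (fun e => ξ e t) ε)

/-- The variational integral `𝒬(u) = ∫₀¹ Q(u, u̇) dt`. -/
noncomputable def varQ (Q : ℝ × ℝ → ℝ × ℝ → ℝ) (u : ℝ → ℝ × ℝ) : ℝ :=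
  ∫ t in (0:ℝ)..1, Q (u t) (deriv u t)

set_option maxHeartbeats 1000000 in
/-- Construction of the adapted reparametrization: the inverse of
`ψ(s) = c⁻¹ ∫₀ˢ √G` where `c = ∫₀¹ √G`. -/
lemma exists_reparam (G : ℝ → ℝ) (hG : Continuous G) (hG1 : ∀ t, 1 ≤ G t) :
    ∃ φ : ℝ → ℝ,
      (∀ y, HasDerivAt φ ((∫ x in (0:ℝ)..1, Real.sqrt (G x)) * (Real.sqrt (G (φ y)))⁻¹) y)
      ∧ Continuous φ ∧ Monotone φ ∧ φ 0 = 0 ∧ φ 1 = 1 := by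
  have hs : Continuous fun t => Real.sqrt (G t) := Real.continuous_sqrt.comp hG
  have hs1 : ∀ t, 1 ≤ Real.sqrt (G t) := by
    intro t
    rw [show (1:ℝ) = Real.sqrt 1 from Real.sqrt_one.symm]
    exact Real.sqrt_le_sqrt (hG1 t)
  have hspos : ∀ t, 0 < Real.sqrt (G t) := fun t => lt_of_lt_of_le one_pos (hs1 t)
  set c : ℝ := ∫ x in (0:ℝ)..1, Real.sqrt (G x) with hc_def
  have hc1 : 1 ≤ c := by
    have h := intervalIntegral.integral_mono_on (μ := volume) (f := fun _ => (1:ℝ))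
      (g := fun t => Real.sqrt (G t)) zero_le_one
      (continuous_const.intervalIntegrable 0 1) (hs.intervalIntegrable 0 1) (fun x _ => hs1 x)
    simpa using h
  have hc0 : 0 < c := lt_of_lt_of_le one_pos hc1
  set ψ : ℝ → ℝ := fun s => c⁻¹ * ∫ x in (0:ℝ)..s, Real.sqrt (G x) with hψ_def
  have hψd : ∀ s, HasDerivAt ψ (c⁻¹ * Real.sqrt (G s)) s := by
    intro s
    exact (intervalIntegral.integral_hasDerivAt_right (hs.intervalIntegrable 0 s)
      (hs.stronglyMeasurableAtFilter _ _) hs.continuousAt).const_mul c⁻¹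
  have hψc : Continuous ψ := continuous_iff_continuousAt.mpr fun s => (hψd s).continuousAt
  have hψmono : StrictMono ψ := strictMono_of_deriv_pos fun s => by
    rw [(hψd s).deriv]; exact mul_pos (inv_pos.mpr hc0) (hspos s)
  have hψ0 : ψ 0 = 0 := by simp [hψ_def]
  have hψ1 : ψ 1 = 1 := by
    simp only [hψ_def, ← hc_def]
    exact inv_mul_cancel₀ hc0.ne'
  have hgrow : ∀ s : ℝ, 0 ≤ s → c⁻¹ * s ≤ ψ s := by
    intro s hsnn
    have h := intervalIntegral.integral_mono_on (μ := volume) (f := fun _ => (1:ℝ))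
      (g := fun t => Real.sqrt (G t)) hsnn
      (continuous_const.intervalIntegrable 0 s) (hs.intervalIntegrable 0 s) (fun x _ => hs1 x)
    simp only [intervalIntegral.integral_const, smul_eq_mul, mul_one, sub_zero] at h
    have := mul_le_mul_of_nonneg_left h (le_of_lt (inv_pos.mpr hc0))
    simpa [hψ_def] using this
  have hgrow' : ∀ s : ℝ, s ≤ 0 → ψ s ≤ c⁻¹ * s := by
    intro s hsnp
    have h := intervalIntegral.integral_mono_on (μ := volume) (f := fun _ => (1:ℝ))
      (g := fun t => Real.sqrt (G t)) hsnp
      (continuous_const.intervalIntegrable s 0) (hs.intervalIntegrable s 0) (fun x _ => hs1 x)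
    simp only [intervalIntegral.integral_const, smul_eq_mul, mul_one, zero_sub] at h
    have h2 : (∫ x in (0:ℝ)..s, Real.sqrt (G x)) ≤ s := by
      rw [intervalIntegral.integral_symm]
      linarith
    have := mul_le_mul_of_nonneg_left h2 (le_of_lt (inv_pos.mpr hc0))
    simpa [hψ_def] using this
  have hψsurj : Function.Surjective ψ := by
    intro y
    have hb0 : (0:ℝ) ≤ c * |y| := by positivity
    have hinv : c⁻¹ * (c * |y|) = |y| := by
      field_simp
    have h1 : ψ (-(c * |y|)) ≤ y := by
      have := hgrow' (-(c * |y|)) (by linarith)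
      have h2 : c⁻¹ * (-(c * |y|)) = -|y| := by rw [mul_neg, hinv]
      have := this.trans (le_of_eq h2)
      linarith [neg_abs_le y]
    have h2 : y ≤ ψ (c * |y|) := by
      have := hgrow (c * |y|) hb0
      rw [hinv] at this
      linarith [le_abs_self y]
    obtain ⟨x, -, hx⟩ := intermediate_value_Icc (by linarith : -(c * |y|) ≤ c * |y|)
      hψc.continuousOn ⟨h1, h2⟩
    exact ⟨x, hx⟩
  set Φ := StrictMono.orderIsoOfSurjective ψ hψmono hψsurj with hΦ_def
  refine ⟨fun y => Φ.symm y, ?_, ?_, ?_, ?_, ?_⟩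
  · intro y
    have hψφ : ∀ z, ψ (Φ.symm z) = z := fun z => Φ.apply_symm_apply z
    have hcont : ContinuousAt (fun z => Φ.symm z) y := (Φ.symm.continuous).continuousAt
    have h := HasDerivAt.of_local_left_inverse hcont (hψd (Φ.symm y))
      (ne_of_gt (mul_pos (inv_pos.mpr hc0) (hspos _)))
      (Filter.Eventually.of_forall hψφ)
    have heq : (c⁻¹ * Real.sqrt (G (Φ.symm y)))⁻¹ = c * (Real.sqrt (G (Φ.symm y)))⁻¹ := by
      rw [mul_inv, inv_inv]
    rwa [heq] at h
  · exact Φ.symm.continuous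
  · exact Φ.symm.monotone
  · exact hψmono.injective (by rw [show ψ (Φ.symm 0) = 0 from Φ.apply_symm_apply 0, hψ0])
  · exact hψmono.injective (by rw [show ψ (Φ.symm 1) = 1 from Φ.apply_symm_apply 1, hψ1])

theorem minimizer_quasinormal' (Q : ℝ × ℝ → ℝ × ℝ → ℝ)
    (hQcont : Continuous fun pq : (ℝ × ℝ) × (ℝ × ℝ) => Q pq.1 pq.2)
    (hQhom : ∀ (p q : ℝ × ℝ) (l : ℝ), 0 < l → Q p (l • q) = l ^ 2 * Q p q)
    (𝒞 : Set (ℝ → ℝ × ℝ))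
    (h𝒞reg : ∀ v ∈ 𝒞, ContDiff ℝ 1 v)
    (h𝒞inv : ∀ v ∈ 𝒞, ∀ (ε₀ : ℝ) (ξ : ℝ → ℝ → ℝ), (0 < ε₀ ∧
      (∀ ε ∈ Set.Ioo (-ε₀) ε₀,
          ContDiff ℝ 1 (ξ ε) ∧ Set.BijOn (ξ ε) (Set.Icc 0 1) (Set.Icc 0 1) ∧
          ∀ t ∈ Set.Icc (0:ℝ) 1, 0 < deriv (ξ ε) t) ∧
      (∀ ε ∈ Set.Ioo (-ε₀) ε₀, ξ ε 0 = 0 ∧ ξ ε 1 = 1) ∧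
      (∀ t : ℝ, ξ 0 t = t) ∧
      (∀ ε ∈ Set.Ioo (-ε₀) ε₀, ContDiff ℝ 1 fun t => deriv (fun e => ξ e t) ε)) →
      ∀ ε ∈ Set.Ioo (-ε₀) ε₀, (fun t => v (ξ ε t)) ∈ 𝒞)
    (u : ℝ → ℝ × ℝ) (hu : u ∈ 𝒞)
    (hmin : ∀ v ∈ 𝒞, (∫ t in (0:ℝ)..1, Q (u t) (deriv u t)) ≤ ∫ t in (0:ℝ)..1, Q (v t) (deriv v t)) :
    ∃ h : ℝ, ∀ᵐ t : ℝ, t ∈ Set.Icc (0:ℝ) 1 → Q (u t) (deriv u t) = h := by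
  classical
  set f : ℝ → ℝ := fun t => Q (u t) (deriv u t) with hf_def
  have huC1 : ContDiff ℝ 1 u := h𝒞reg u hu
  have hudiff : Differentiable ℝ u := huC1.differentiable one_ne_zero
  have hfcont : Continuous f := by
    rw [hf_def]
    exact hQcont.comp (huC1.continuous.prodMk (huC1.continuous_deriv le_rfl))
  obtain ⟨K₀, hK₀⟩ := (isCompact_Icc : IsCompact (Set.Icc (0:ℝ) 1)).exists_bound_of_continuousOn
    hfcont.continuousOn
  set K : ℝ := max K₀ 0 with hK_def
  have hKnn : 0 ≤ K := le_max_right _ _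
  have hK : ∀ t ∈ Set.Icc (0:ℝ) 1, |f t| ≤ K := fun t ht =>
    le_trans (by simpa [Real.norm_eq_abs] using hK₀ t ht) (le_max_left _ _)
  set C : ℝ := 8 * K + 8 with hC_def
  have hCpos : 0 < C := by rw [hC_def]; linarith
  set g : ℝ → ℝ := fun t => max (-K) (min (f t) K) + C with hg_def
  have hgcont : Continuous g := by
    rw [hg_def]; exact (continuous_const.max (hfcont.min continuous_const)).add continuous_const
  have hglo : ∀ t, 7 * K + 8 ≤ g t := by
    intro t
    have h1 : -K ≤ max (-K) (min (f t) K) := le_max_left _ _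
    simp only [hg_def, hC_def]; linarith
  have hghi : ∀ t, g t ≤ 9 * K + 8 := by
    intro t
    have h1 : max (-K) (min (f t) K) ≤ K := max_le (by linarith) (min_le_right _ _)
    simp only [hg_def, hC_def]; linarith
  have hg1 : ∀ t, 1 ≤ g t := fun t => le_trans (by linarith) (hglo t)
  have hgf : ∀ t ∈ Set.Icc (0:ℝ) 1, g t = f t + C := by
    intro t ht
    have h := abs_le.mp (hK t ht)
    simp only [hg_def]
    rw [min_eq_left h.2, max_eq_right h.1]
  obtain ⟨φ, hφd0, hφcont, hφmono, hφ0, hφ1⟩ := exists_reparam g hgcont hg1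
  set c : ℝ := ∫ x in (0:ℝ)..1, Real.sqrt (g x) with hc_def
  -- basic sqrt facts
  have hs : Continuous fun t => Real.sqrt (g t) := Real.continuous_sqrt.comp hgcont
  have hs1 : ∀ t, 1 ≤ Real.sqrt (g t) := by
    intro t
    rw [show (1:ℝ) = Real.sqrt 1 from Real.sqrt_one.symm]
    exact Real.sqrt_le_sqrt (hg1 t)
  have hspos : ∀ t, 0 < Real.sqrt (g t) := fun t => lt_of_lt_of_le one_pos (hs1 t)
  have hslo : ∀ t, Real.sqrt (7 * K + 8) ≤ Real.sqrt (g t) :=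
    fun t => Real.sqrt_le_sqrt (hglo t)
  have hshi : ∀ t, Real.sqrt (g t) ≤ Real.sqrt (9 * K + 8) :=
    fun t => Real.sqrt_le_sqrt (hghi t)
  have hclo : Real.sqrt (7 * K + 8) ≤ c := by
    have h := intervalIntegral.integral_mono_on (μ := volume)
      (f := fun _ => Real.sqrt (7 * K + 8)) (g := fun t => Real.sqrt (g t)) zero_le_one
      (continuous_const.intervalIntegrable 0 1) (hs.intervalIntegrable 0 1) (fun x _ => hslo x)
    simpa [hc_def] using h
  have hchi : c ≤ Real.sqrt (9 * K + 8) := by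
    have h := intervalIntegral.integral_mono_on (μ := volume)
      (f := fun t => Real.sqrt (g t)) (g := fun _ => Real.sqrt (9 * K + 8)) zero_le_one
      (hs.intervalIntegrable 0 1) (continuous_const.intervalIntegrable 0 1) (fun x _ => hshi x)
    simpa [hc_def] using h
  have hsqlo1 : (1:ℝ) ≤ Real.sqrt (7 * K + 8) := by
    rw [show (1:ℝ) = Real.sqrt 1 from Real.sqrt_one.symm]
    exact Real.sqrt_le_sqrt (by linarith)
  have hc1 : 1 ≤ c := le_trans hsqlo1 hclo
  have hc0 : 0 < c := lt_of_lt_of_le one_pos hc1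
  have hsq32 : Real.sqrt (9 * K + 8) ≤ 3 / 2 * Real.sqrt (7 * K + 8) := by
    have h1 : (9 * K + 8 : ℝ) ≤ (3 / 2) ^ 2 * (7 * K + 8) := by nlinarith
    calc Real.sqrt (9 * K + 8) ≤ Real.sqrt ((3 / 2) ^ 2 * (7 * K + 8)) := Real.sqrt_le_sqrt h1
      _ = 3 / 2 * Real.sqrt (7 * K + 8) := by
          rw [Real.sqrt_mul (by positivity), Real.sqrt_sq (by norm_num)]
  set w : ℝ → ℝ := fun y => c * (Real.sqrt (g (φ y)))⁻¹ with hw_def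
  have hφd : ∀ y, HasDerivAt φ (w y) y := by
    intro y; simp only [hw_def]; exact hφd0 y
  have hwcont : Continuous w := by
    rw [hw_def]
    exact continuous_const.mul ((hs.comp hφcont).inv₀ fun y => (hspos (φ y)).ne')
  have hwpos : ∀ t, 0 < w t := by
    intro t; simp only [hw_def]
    exact mul_pos hc0 (inv_pos.mpr (hspos (φ t)))
  have hw_lb : ∀ t, 1 / 2 ≤ w t := by
    intro t
    simp only [hw_def]
    set a := Real.sqrt (g (φ t)) with ha_def
    have ha : 0 < a := hspos (φ t)
    have h1 : a ≤ 3 / 2 * c := le_trans (hshi (φ t)) (le_trans hsq32 (by nlinarith))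
    have h2 : (1 / 2 : ℝ) * a ≤ c := by nlinarith
    calc (1/2 : ℝ) = (1/2 * a) * a⁻¹ := by field_simp
      _ ≤ c * a⁻¹ := by gcongr
  have hw_ub : ∀ t, w t ≤ 3 / 2 := by
    intro t
    simp only [hw_def]
    set a := Real.sqrt (g (φ t)) with ha_def
    have ha : 0 < a := hspos (φ t)
    have h1 : c ≤ 3 / 2 * a := le_trans hchi (le_trans hsq32 (by nlinarith [hslo (φ t)]))
    calc c * a⁻¹ ≤ (3/2 * a) * a⁻¹ := by gcongr
      _ = 3/2 := by field_simp
  have hφC1 : ContDiff ℝ 1 φ := by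
    rw [contDiff_one_iff_deriv]
    exact ⟨fun y => (hφd y).differentiableAt,
      by rw [show deriv φ = w from funext fun y => (hφd y).deriv]; exact hwcont⟩
  -- the variation
  set ξ : ℝ → ℝ → ℝ := fun ε t => t + ε * (φ t - t) with hξ_def
  have hξd : ∀ ε t, HasDerivAt (ξ ε) (1 + ε * (w t - 1)) t := by
    intro ε t
    have h := (hasDerivAt_id t).add (((hφd t).sub (hasDerivAt_id t)).const_mul ε)
    exact h
  have hadm : (0 < (3/2 : ℝ) ∧
      (∀ ε ∈ Set.Ioo (-(3/2) : ℝ) (3/2),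
          ContDiff ℝ 1 (ξ ε) ∧ Set.BijOn (ξ ε) (Set.Icc 0 1) (Set.Icc 0 1) ∧
          ∀ t ∈ Set.Icc (0:ℝ) 1, 0 < deriv (ξ ε) t) ∧
      (∀ ε ∈ Set.Ioo (-(3/2) : ℝ) (3/2), ξ ε 0 = 0 ∧ ξ ε 1 = 1) ∧
      (∀ t : ℝ, ξ 0 t = t) ∧
      (∀ ε ∈ Set.Ioo (-(3/2) : ℝ) (3/2), ContDiff ℝ 1 fun t => deriv (fun e => ξ e t) ε)) := by
    refine ⟨by norm_num, ?_, ?_, ?_, ?_⟩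
    · intro ε hε
      have hεabs : |ε| < 3 / 2 := abs_lt.mpr ⟨hε.1, hε.2⟩
      have hpos : ∀ t, 0 < 1 + ε * (w t - 1) := by
        intro t
        have h1 : |w t - 1| ≤ 1 / 2 := abs_le.mpr ⟨by linarith [hw_lb t], by linarith [hw_ub t]⟩
        have h2 : |ε * (w t - 1)| ≤ 3 / 2 * (1 / 2) := by
          rw [abs_mul]
          exact mul_le_mul (le_of_lt hεabs) h1 (abs_nonneg _) (by norm_num)
        have h3 := neg_abs_le (ε * (w t - 1))
        linarith
      have hcont : ContDiff ℝ 1 (ξ ε) := by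
        rw [hξ_def]
        exact contDiff_id.add (contDiff_const.mul (hφC1.sub contDiff_id))
      have hξ0 : ξ ε 0 = 0 := by simp [hξ_def, hφ0]
      have hξ1 : ξ ε 1 = 1 := by simp [hξ_def, hφ1]
      have hmonoOn : StrictMonoOn (ξ ε) (Set.Icc 0 1) := by
        apply strictMonoOn_of_deriv_pos (convex_Icc 0 1) hcont.continuous.continuousOn
        intro x _
        rw [(hξd ε x).deriv]
        exact hpos x
      refine ⟨hcont, ⟨?_, hmonoOn.injOn, ?_⟩, fun t _ => by rw [(hξd ε t).deriv]; exact hpos t⟩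
      · intro t ht
        constructor
        · rcases eq_or_lt_of_le ht.1 with h | h
          · rw [← h, hξ0]
          · rw [← hξ0]
            exact le_of_lt (hmonoOn (Set.left_mem_Icc.mpr zero_le_one) ht h)
        · rcases eq_or_lt_of_le ht.2 with h | h
          · rw [h, hξ1]
          · rw [← hξ1]
            exact le_of_lt (hmonoOn ht (Set.right_mem_Icc.mpr zero_le_one) h)
      · have h := intermediate_value_Icc zero_le_one hcont.continuous.continuousOn
        rw [hξ0, hξ1] at h
        exact h
    · intro ε _
      exact ⟨by simp [hξ_def, hφ0], by simp [hξ_def, hφ1]⟩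
    · intro t; simp [hξ_def]
    · intro ε _
      have heq : (fun t => deriv (fun e => ξ e t) ε) = fun t => φ t - t := by
        funext t
        have h : HasDerivAt (fun e => ξ e t) (φ t - t) ε := by
          have := ((hasDerivAt_id ε).mul_const (φ t - t)).const_add t
          simpa [hξ_def] using this
        exact h.deriv
      rw [heq]
      exact hφC1.sub contDiff_id
  have hv : (fun t => u (ξ 1 t)) ∈ 𝒞 :=
    h𝒞inv u hu (3/2) ξ hadm 1 (by constructor <;> norm_num)
  have hveq : (fun t => u (ξ 1 t)) = fun t => u (φ t) := by
    funext t
    congr 1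
    simp only [hξ_def]
    ring
  rw [hveq] at hv
  -- derivative of the reparametrized curve
  have huφd : ∀ t, HasDerivAt (fun s => u (φ s)) (w t • deriv u (φ t)) t := by
    intro t
    have h := HasDerivAt.scomp (x := t) ((hudiff (φ t)).hasDerivAt) (hφd t)
    exact h
  set F : ℝ → ℝ := fun s => (c * (Real.sqrt (g s))⁻¹) * f s with hF_def
  have hFcont : Continuous F := by
    rw [hF_def]
    exact (continuous_const.mul (hs.inv₀ fun s => (hspos s).ne')).mul hfcont
  have hJ1 : (∫ t in (0:ℝ)..1, Q (u (φ t)) (deriv (fun s => u (φ s)) t))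
      = ∫ t in (0:ℝ)..1, w t • (F ∘ φ) t := by
    apply intervalIntegral.integral_congr
    intro t _
    show Q (u (φ t)) (deriv (fun s => u (φ s)) t) = w t • (F ∘ φ) t
    rw [(huφd t).deriv, hQhom _ _ (w t) (hwpos t)]
    simp only [hF_def, hw_def, hf_def, Function.comp, smul_eq_mul]
    ring
  have hJ2 : (∫ t in (0:ℝ)..1, w t • (F ∘ φ) t) = ∫ s in (0:ℝ)..1, F s := by
    have h := intervalIntegral.integral_comp_smul_deriv (a := (0:ℝ)) (b := 1) (f := φ) (f' := w) (g := F)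
      (fun x _ => hφd x) hwcont.continuousOn hFcont
    rwa [hφ0, hφ1] at h
  set I : ℝ := ∫ s in (0:ℝ)..1, (Real.sqrt (g s))⁻¹ with hI_def
  set Gi : ℝ := ∫ s in (0:ℝ)..1, g s with hGi_def
  have hsinv_cont : Continuous fun s => (Real.sqrt (g s))⁻¹ :=
    hs.inv₀ fun s => (hspos s).ne'
  have hfg_int : (∫ t in (0:ℝ)..1, f t) = Gi - C := by
    have h1 : ∀ t ∈ Set.uIcc (0:ℝ) 1, f t = g t - C := by
      intro t ht
      rw [Set.uIcc_of_le zero_le_one] at ht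
      have := hgf t ht
      linarith
    rw [intervalIntegral.integral_congr h1,
      intervalIntegral.integral_sub (hgcont.intervalIntegrable 0 1)
        (continuous_const.intervalIntegrable 0 1)]
    simp [hGi_def]
  have hFval : (∫ s in (0:ℝ)..1, F s) = c * c - (c * C) * I := by
    have h1 : ∀ s ∈ Set.uIcc (0:ℝ) 1,
        F s = c * Real.sqrt (g s) - (c * C) * (Real.sqrt (g s))⁻¹ := by
      intro s hsmem
      rw [Set.uIcc_of_le zero_le_one] at hsmem
      have hfs : f s = g s - C := by have := hgf s hsmem; linarith
      have hsq : Real.sqrt (g s) * Real.sqrt (g s) = g s :=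
        Real.mul_self_sqrt (by linarith [hg1 s])
      have hane : Real.sqrt (g s) ≠ 0 := (hspos s).ne'
      have h2 : (Real.sqrt (g s))⁻¹ * g s = Real.sqrt (g s) := by
        field_simp
        rw [sq, hsq]
      calc F s = c * ((Real.sqrt (g s))⁻¹ * g s) - c * C * (Real.sqrt (g s))⁻¹ := by
            rw [hF_def]; simp only; rw [hfs]; ring
        _ = c * Real.sqrt (g s) - (c * C) * (Real.sqrt (g s))⁻¹ := by rw [h2]
    rw [intervalIntegral.integral_congr h1,
      intervalIntegral.integral_sub (f := fun s => c * Real.sqrt (g s))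
        (g := fun s => (c * C) * (Real.sqrt (g s))⁻¹)
        ((continuous_const.mul hs).intervalIntegrable 0 1)
        ((continuous_const.mul hsinv_cont).intervalIntegrable 0 1),
      intervalIntegral.integral_const_mul, intervalIntegral.integral_const_mul,
      ← hc_def, ← hI_def]
  have hIc : c⁻¹ ≤ I := by
    have hpt : ∀ s ∈ Set.Icc (0:ℝ) 1,
        2 * c⁻¹ - Real.sqrt (g s) * (c⁻¹) ^ 2 ≤ (Real.sqrt (g s))⁻¹ := by
      intro s _
      set a := Real.sqrt (g s) with ha_def
      have ha : 0 < a := hspos s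
      have key : a⁻¹ - (2 * c⁻¹ - a * (c⁻¹) ^ 2) = (a - c) ^ 2 * (a⁻¹ * (c⁻¹) ^ 2) := by
        field_simp
        ring
      have h2 : 0 ≤ (a - c) ^ 2 * (a⁻¹ * (c⁻¹) ^ 2) := by positivity
      linarith
    have h := intervalIntegral.integral_mono_on (μ := volume)
      (f := fun s => 2 * c⁻¹ - Real.sqrt (g s) * (c⁻¹) ^ 2)
      (g := fun s => (Real.sqrt (g s))⁻¹) zero_le_one
      ((continuous_const.sub (hs.mul continuous_const)).intervalIntegrable 0 1)
      (hsinv_cont.intervalIntegrable 0 1) hpt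
    have hL : (∫ s in (0:ℝ)..1, (2 * c⁻¹ - Real.sqrt (g s) * (c⁻¹) ^ 2))
        = 2 * c⁻¹ - c * (c⁻¹) ^ 2 := by
      rw [intervalIntegral.integral_sub (f := fun _ => 2 * c⁻¹)
        (g := fun s => Real.sqrt (g s) * (c⁻¹) ^ 2) (continuous_const.intervalIntegrable 0 1)
        ((hs.mul continuous_const).intervalIntegrable 0 1)]
      rw [show (∫ s in (0:ℝ)..1, Real.sqrt (g s) * (c⁻¹) ^ 2)
          = (∫ s in (0:ℝ)..1, Real.sqrt (g s)) * (c⁻¹) ^ 2 from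
        intervalIntegral.integral_mul_const _ _, ← hc_def]
      simp
    rw [hL, ← hI_def] at h
    have hcc : c * (c⁻¹) ^ 2 = c⁻¹ := by field_simp
    linarith
  have hE : (∫ s in (0:ℝ)..1, (Real.sqrt (g s) - c) ^ 2) = Gi - c * c := by
    have h1 : ∀ s ∈ Set.uIcc (0:ℝ) 1,
        (Real.sqrt (g s) - c) ^ 2 = g s - (2 * c) * Real.sqrt (g s) + c ^ 2 := by
      intro s _
      have hsq : Real.sqrt (g s) * Real.sqrt (g s) = g s :=
        Real.mul_self_sqrt (by linarith [hg1 s])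
      linear_combination hsq
    rw [intervalIntegral.integral_congr h1,
      intervalIntegral.integral_add (f := fun s => g s - (2 * c) * Real.sqrt (g s))
        (g := fun _ => c ^ 2)
        ((hgcont.sub (continuous_const.mul hs)).intervalIntegrable 0 1)
        (continuous_const.intervalIntegrable 0 1),
      intervalIntegral.integral_sub (f := fun s => g s) (g := fun s => (2 * c) * Real.sqrt (g s))
        (hgcont.intervalIntegrable 0 1)
        ((continuous_const.mul hs).intervalIntegrable 0 1),
      intervalIntegral.integral_const_mul, ← hc_def, ← hGi_def]
    simp only [intervalIntegral.integral_const, smul_eq_mul, sub_zero, mul_one]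
    ring
  have hEnn : 0 ≤ ∫ s in (0:ℝ)..1, (Real.sqrt (g s) - c) ^ 2 :=
    intervalIntegral.integral_nonneg zero_le_one fun s _ => sq_nonneg _
  have hmin' : (∫ t in (0:ℝ)..1, f t)
      ≤ ∫ t in (0:ℝ)..1, Q (u (φ t)) (deriv (fun s => u (φ s)) t) := hmin _ hv
  have hchain : Gi - C ≤ c * c - (c * C) * I := by
    rw [← hfg_int, ← hFval, ← hJ2, ← hJ1]
    exact hmin'
  have hcI : 1 ≤ c * I := by
    have h := mul_le_mul_of_nonneg_left hIc (le_of_lt hc0)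
    rwa [mul_inv_cancel₀ hc0.ne'] at h
  have hGc : Gi ≤ c * c := by nlinarith
  have hEzero : (∫ s in (0:ℝ)..1, (Real.sqrt (g s) - c) ^ 2) = 0 :=
    le_antisymm (by rw [hE]; linarith) hEnn
  refine ⟨c * c - C, ?_⟩
  have hset : (∫ s in Set.Ioc (0:ℝ) 1, (Real.sqrt (g s) - c) ^ 2) = 0 := by
    rw [← intervalIntegral.integral_of_le zero_le_one]
    exact hEzero
  have hInt : MeasureTheory.IntegrableOn (fun s => (Real.sqrt (g s) - c) ^ 2)
      (Set.Ioc (0:ℝ) 1) := ((hs.sub continuous_const).pow 2).integrableOn_Ioc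
  have hae0 : (fun s => (Real.sqrt (g s) - c) ^ 2)
      =ᵐ[MeasureTheory.volume.restrict (Set.Ioc (0:ℝ) 1)] 0 :=
    (MeasureTheory.integral_eq_zero_iff_of_nonneg (fun s => sq_nonneg _) hInt).mp hset
  have hae1 : ∀ᵐ s : ℝ, s ∈ Set.Ioc (0:ℝ) 1 → (Real.sqrt (g s) - c) ^ 2 = 0 :=
    (MeasureTheory.ae_restrict_iff' measurableSet_Ioc).mp hae0
  have hne : ∀ᵐ s : ℝ, s ≠ 0 := by
    have h0 : MeasureTheory.volume ({(0:ℝ)} : Set ℝ) = 0 := Real.volume_singleton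
    have := MeasureTheory.measure_eq_zero_iff_ae_notMem.mp h0
    simpa using this
  filter_upwards [hae1, hne] with t h1 h2 ht
  have htIoc : t ∈ Set.Ioc (0:ℝ) 1 := ⟨lt_of_le_of_ne ht.1 (Ne.symm h2), ht.2⟩
  have h3 : Real.sqrt (g t) = c := by
    have h4 := h1 htIoc
    have h5 := pow_eq_zero_iff (n := 2) (by norm_num) |>.mp h4
    linarith [sub_eq_zero.mp h5]
  have h4 : g t = c * c := by
    rw [← h3]
    exact (Real.mul_self_sqrt (by linarith [hg1 t])).symm
  have h5 : g t = f t + C := hgf t ht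
  show f t = c * c - C
  linarith

/-- Minimizers of 2-homogeneous variational integrals are quasinormal: if `Q` is
continuous with `Q(p,q) ≤ m₂|q|²` and `Q(p,λq) = λ²Q(p,q)` for `λ > 0`, `𝒞` is a class
of loops invariant under admissible parameter variations, and `u ∈ 𝒞` minimizes
`𝒬(u) = ∫₀¹ Q(u,u̇)` over `𝒞`, then `Q(u(t),u̇(t))` is a.e. constant on `[0,1]`. -/
theorem minimizer_quasinormal (Q : ℝ × ℝ → ℝ × ℝ → ℝ) (m₂ : ℝ)
    (hQcont : Continuous fun pq : (ℝ × ℝ) × (ℝ × ℝ) => Q pq.1 pq.2)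
    (hQbound : ∀ p q : ℝ × ℝ, Q p q ≤ m₂ * nrm2 q ^ 2)
    (hQhom : ∀ (p q : ℝ × ℝ) (l : ℝ), 0 < l → Q p (l • q) = l ^ 2 * Q p q)
    (𝒞 : Set (ℝ → ℝ × ℝ))
    (h𝒞reg : ∀ v ∈ 𝒞, ContDiff ℝ 1 v)
    (h𝒞inv : ∀ v ∈ 𝒞, ∀ (ε₀ : ℝ) (ξ : ℝ → ℝ → ℝ), IsAdmissibleVariation ε₀ ξ →
      ∀ ε ∈ Set.Ioo (-ε₀) ε₀, (fun t => v (ξ ε t)) ∈ 𝒞)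
    (u : ℝ → ℝ × ℝ) (hu : u ∈ 𝒞)
    (hmin : ∀ v ∈ 𝒞, varQ Q u ≤ varQ Q v) :
    ∃ h : ℝ, ∀ᵐ t : ℝ, t ∈ Set.Icc (0:ℝ) 1 → Q (u t) (deriv u t) = h := by
  exact minimizer_quasinormal' Q hQcont hQhom 𝒞 h𝒞reg
    (fun v hv ε₀ ξ hξ => h𝒞inv v hv ε₀ ξ hξ) u hu (fun v hv => hmin v hv)
end

section
/- Let $u \in C^{0,s}(\mathbb{R}^N)$ be bounded, $s\in(0,1)$, and let $E_s u(x,y) = \int_{\mathbb{R}^N} P_{N,s}(x-\xi,y)u(\xi)\,d\xi$ with $P_{N,s}(x,y) = p_{N,s}\,y^{2s}(y^2+|x|^2)^{-(N+2s)/2}$ the fractional Poisson kernel ($p_{N,s}$ chosen so the kernel has unit mass). Then $E_s u \in C^{0,s}(\overline{\mathbb{R}^{N+1}_+})$ with $\|E_s u\|_{C^{0,s}(\overline{\mathbb{R}^{N+1}_+})} \leq C\,\|u\|_{C^{0,s}(\mathbb{R}^N)}$, where $C$ depends only on $N$ and $s$. -/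
open MeasureTheory Real

/-- The normalizing constant `p_{N,s} = Γ((N+2s)/2) / (π^{N/2} Γ(s))` of the fractional
Poisson kernel, chosen so that the kernel has unit mass. -/
noncomputable def pConst (N : ℕ) (s : ℝ) : ℝ :=
  Real.Gamma (((N : ℝ) + 2 * s) / 2) / (π ^ ((N : ℝ) / 2) * Real.Gamma s)

/-- The fractional Poisson extension
`E_s u (x,y) = p_{N,s} ∫ y^{2s} (y² + |x-ξ|²)^{-(N+2s)/2} u(ξ) dξ` for `y > 0`,
extended by trace `u` at `y = 0`. -/
noncomputable def fracExt (N : ℕ) (s : ℝ) (u : EuclideanSpace ℝ (Fin N) → ℝ)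
    (x : EuclideanSpace ℝ (Fin N)) (y : ℝ) : ℝ :=
  if y = 0 then u x
  else pConst N s *
    ∫ ξ : EuclideanSpace ℝ (Fin N),
      y ^ (2 * s) / (y ^ 2 + ‖x - ξ‖ ^ 2) ^ (((N : ℝ) + 2 * s) / 2) * u ξ

noncomputable def ker (N : ℕ) (s : ℝ) (η : EuclideanSpace ℝ (Fin N)) : ℝ :=
  (1 + ‖η‖ ^ 2) ^ (-(((N : ℝ) + 2 * s) / 2))

lemma ker_nonneg (N : ℕ) (s : ℝ) (η : EuclideanSpace ℝ (Fin N)) : 0 ≤ ker N s η := by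
  unfold ker; positivity

lemma ker_measurable (N : ℕ) (s : ℝ) : Measurable (ker N s) := by
  unfold ker
  fun_prop

lemma integrable_aux (N : ℕ) {r : ℝ} (hr : (N : ℝ) < r) :
    Integrable (fun η : EuclideanSpace ℝ (Fin N) => (1 + ‖η‖ ^ 2) ^ (-r / 2)) := by
  have := integrable_rpow_neg_one_add_norm_sq
    (E := EuclideanSpace ℝ (Fin N)) (μ := volume) (r := r) (by simpa using hr)
  exact this

lemma integrable_ker (N : ℕ) {s : ℝ} (hs : 0 < s) : Integrable (ker N s) := by
  have h := integrable_aux N (r := (N : ℝ) + 2 * s) (by linarith)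
  have : ker N s = fun η : EuclideanSpace ℝ (Fin N) =>
      (1 + ‖η‖ ^ 2) ^ (-((N : ℝ) + 2 * s) / 2) := by
    funext η; unfold ker; congr 1; ring
  rw [this]; exact h

lemma integrable_rpow_mul_ker (N : ℕ) {s : ℝ} (hs : 0 < s) :
    Integrable (fun η : EuclideanSpace ℝ (Fin N) => ‖η‖ ^ s * ker N s η) := by
  have hbd : ∀ η : EuclideanSpace ℝ (Fin N),
      ‖‖η‖ ^ s * ker N s η‖ ≤ (1 + ‖η‖ ^ 2) ^ (-((N : ℝ) + s) / 2) := by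
    intro η
    have h1 : (0:ℝ) < 1 + ‖η‖ ^ 2 := by positivity
    have h2 : ‖η‖ ^ s ≤ (1 + ‖η‖ ^ 2) ^ (s / 2) := by
      have : ‖η‖ = (‖η‖ ^ 2) ^ ((1:ℝ)/2) := by
        rw [← Real.rpow_natCast ‖η‖ 2, ← Real.rpow_mul (norm_nonneg _)]
        norm_num
      calc ‖η‖ ^ s = ((‖η‖ ^ 2) ^ ((1:ℝ)/2)) ^ s := by rw [← this]
        _ ≤ ((1 + ‖η‖ ^ 2) ^ ((1:ℝ)/2)) ^ s := by
            apply Real.rpow_le_rpow (by positivity) _ hs.le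
            apply Real.rpow_le_rpow (by positivity) (by linarith) (by norm_num)
        _ = (1 + ‖η‖ ^ 2) ^ (s / 2) := by
            rw [← Real.rpow_mul h1.le]; ring_nf
    have h3 : ‖η‖ ^ s * ker N s η ≤ (1 + ‖η‖ ^ 2) ^ (s / 2) * (1 + ‖η‖ ^ 2) ^ (-(((N : ℝ) + 2 * s) / 2)) := by
      apply mul_le_mul_of_nonneg_right h2 (ker_nonneg N s η)
    rw [Real.norm_eq_abs, abs_of_nonneg
      (mul_nonneg (Real.rpow_nonneg (norm_nonneg _) _) (ker_nonneg N s η))]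
    calc ‖η‖ ^ s * ker N s η ≤ _ := h3
        _ = (1 + ‖η‖ ^ 2) ^ (s / 2 + -(((N : ℝ) + 2 * s) / 2)) := by
            rw [← Real.rpow_add h1]
        _ = (1 + ‖η‖ ^ 2) ^ (-((N : ℝ) + s) / 2) := by congr 1; ring
  refine Integrable.mono' (integrable_aux N (r := (N : ℝ) + s) (by linarith)) ?_
    (Filter.Eventually.of_forall hbd)
  have hm : Measurable fun η : EuclideanSpace ℝ (Fin N) => ‖η‖ ^ s * ker N s η := by
    unfold ker; fun_prop
  exact hm.aestronglyMeasurable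

lemma integrable_rexp_gauss (N : ℕ) {t : ℝ} (ht : 0 < t) :
    Integrable (fun v : EuclideanSpace ℝ (Fin N) => rexp (-t * ‖v‖ ^ 2)) := by
  have h := (GaussianFourier.integrable_cexp_neg_mul_sq_norm_add
    (V := EuclideanSpace ℝ (Fin N)) (b := (t : ℂ)) (by simpa using ht) 0 0).norm
  refine h.congr (Filter.Eventually.of_forall fun v => ?_)
  simp [Complex.norm_exp, ← Complex.ofReal_pow]

lemma integral_rexp_gauss (N : ℕ) {t : ℝ} (ht : 0 < t) :
    ∫ v : EuclideanSpace ℝ (Fin N), rexp (-t * ‖v‖ ^ 2) = (π / t) ^ ((N : ℝ) / 2) := by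
  have h := GaussianFourier.integral_rexp_neg_mul_sq_norm
    (V := EuclideanSpace ℝ (Fin N)) ht
  simpa [finrank_euclideanSpace_fin] using h

lemma integral_ker (N : ℕ) {s : ℝ} (hs : 0 < s) :
    ∫ η : EuclideanSpace ℝ (Fin N), ker N s η =
      π ^ ((N : ℝ) / 2) * Real.Gamma s / Real.Gamma (((N : ℝ) + 2 * s) / 2) := by
  set β := ((N : ℝ) + 2 * s) / 2 with hβdef
  have hβ : 0 < β := by positivity
  have hΓβ : 0 < Real.Gamma β := Real.Gamma_pos_of_pos hβ
  -- pointwise subordination identity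
  have hrep : ∀ η : EuclideanSpace ℝ (Fin N), ker N s η =
      (Real.Gamma β)⁻¹ * ∫ t in Set.Ioi 0, t ^ (β - 1) * rexp (-((1 + ‖η‖ ^ 2) * t)) := by
    intro η
    have hr : (0:ℝ) < 1 + ‖η‖ ^ 2 := by positivity
    rw [integral_rpow_mul_exp_neg_mul_Ioi hβ hr, one_div, Real.inv_rpow hr.le,
      ← Real.rpow_neg hr.le]
    unfold ker
    rw [show -(((N : ℝ) + 2 * s) / 2) = -β from rfl]
    field_simp
  have hIntOn : ∀ r : ℝ, 0 < r →
      IntegrableOn (fun t : ℝ => t ^ (β - 1) * rexp (-(r * t))) (Set.Ioi 0) := by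
    intro r hr
    have h := integrableOn_rpow_mul_exp_neg_mul_rpow (p := 1) (s := β - 1) (b := r)
      (by linarith) (by norm_num) hr
    refine h.congr_fun (fun x hx => ?_) measurableSet_Ioi
    simp only [Real.rpow_one, neg_mul]
  set F : EuclideanSpace ℝ (Fin N) → ℝ → ENNReal := fun η t =>
    ENNReal.ofReal (t ^ (β - 1) * rexp (-((1 + ‖η‖ ^ 2) * t))) with hF
  have hFmeas : AEMeasurable (Function.uncurry F)
      (volume.prod (volume.restrict (Set.Ioi 0))) := by
    apply Measurable.aemeasurable
    apply Measurable.ennreal_ofReal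
    have : (Function.uncurry fun (η : EuclideanSpace ℝ (Fin N)) (t : ℝ) =>
        t ^ (β - 1) * rexp (-((1 + ‖η‖ ^ 2) * t))) =
        fun p : EuclideanSpace ℝ (Fin N) × ℝ =>
        p.2 ^ (β - 1) * rexp (-((1 + ‖p.1‖ ^ 2) * p.2)) := rfl
    show Measurable (Function.uncurry fun (η : EuclideanSpace ℝ (Fin N)) (t : ℝ) =>
        t ^ (β - 1) * rexp (-((1 + ‖η‖ ^ 2) * t)))
    rw [this]
    fun_prop
  have step1 : ∫⁻ η : EuclideanSpace ℝ (Fin N), ENNReal.ofReal (ker N s η) =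
      ENNReal.ofReal ((Real.Gamma β)⁻¹) *
        ∫⁻ η : EuclideanSpace ℝ (Fin N), ∫⁻ t in Set.Ioi 0, F η t := by
    rw [← lintegral_const_mul' _ _ ENNReal.ofReal_ne_top]
    apply lintegral_congr
    intro η
    rw [hrep η, ENNReal.ofReal_mul (inv_nonneg.mpr hΓβ.le)]
    congr 1
    apply ofReal_integral_eq_lintegral_ofReal (hIntOn _ (by positivity))
    rw [Filter.EventuallyLE, ae_restrict_iff' measurableSet_Ioi]
    apply Filter.Eventually.of_forall
    intro t ht
    have ht' : 0 < t := ht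
    positivity
  have step2 : ∫⁻ η : EuclideanSpace ℝ (Fin N), ∫⁻ t in Set.Ioi 0, F η t =
      ∫⁻ t in Set.Ioi 0, ∫⁻ η : EuclideanSpace ℝ (Fin N), F η t :=
    lintegral_lintegral_swap hFmeas
  have step3 : ∀ t ∈ Set.Ioi (0:ℝ), ∫⁻ η : EuclideanSpace ℝ (Fin N), F η t =
      ENNReal.ofReal (π ^ ((N : ℝ) / 2) * (rexp (-t) * t ^ (s - 1))) := by
    intro t ht
    rw [Set.mem_Ioi] at ht
    have hFt : ∀ η : EuclideanSpace ℝ (Fin N), F η t =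
        ENNReal.ofReal (t ^ (β - 1) * rexp (-t)) *
          ENNReal.ofReal (rexp (-t * ‖η‖ ^ 2)) := by
      intro η
      rw [hF]
      simp only
      rw [← ENNReal.ofReal_mul (by positivity)]
      congr 1
      rw [show -((1 + ‖η‖ ^ 2) * t) = -t + -t * ‖η‖ ^ 2 by ring, Real.exp_add]
      ring
    simp_rw [hFt]
    rw [lintegral_const_mul' _ _ ENNReal.ofReal_ne_top,
      ← ofReal_integral_eq_lintegral_ofReal (integrable_rexp_gauss N ht)
        (Filter.Eventually.of_forall fun v => (Real.exp_pos _).le),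
      integral_rexp_gauss N ht, ← ENNReal.ofReal_mul (by positivity)]
    congr 1
    have ht2 : t ^ (β - 1) / t ^ ((N : ℝ) / 2) = t ^ (s - 1) := by
      rw [← Real.rpow_sub ht]
      congr 1
      rw [hβdef]; ring
    rw [Real.div_rpow pi_pos.le ht.le]
    calc t ^ (β - 1) * rexp (-t) * (π ^ ((N:ℝ)/2) / t ^ ((N:ℝ)/2))
        = π ^ ((N:ℝ)/2) * (rexp (-t) * (t ^ (β - 1) / t ^ ((N:ℝ)/2))) := by ring
      _ = π ^ ((N:ℝ)/2) * (rexp (-t) * t ^ (s - 1)) := by rw [ht2]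
  have step4 : ∫⁻ t in Set.Ioi 0, ∫⁻ η : EuclideanSpace ℝ (Fin N), F η t =
      ENNReal.ofReal (π ^ ((N : ℝ) / 2)) * ENNReal.ofReal (Real.Gamma s) := by
    rw [setLIntegral_congr_fun measurableSet_Ioi step3]
    have hpi : (0:ℝ) ≤ π ^ ((N : ℝ) / 2) := by positivity
    simp_rw [ENNReal.ofReal_mul hpi]
    rw [lintegral_const_mul' _ _ ENNReal.ofReal_ne_top]
    congr 1
    rw [← ofReal_integral_eq_lintegral_ofReal (Real.GammaIntegral_convergent hs) ?_,
      ← Real.Gamma_eq_integral hs]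
    rw [Filter.EventuallyLE, ae_restrict_iff' measurableSet_Ioi]
    apply Filter.Eventually.of_forall
    intro t ht
    have ht' : 0 < t := ht
    positivity
  have hconv : ∫ η : EuclideanSpace ℝ (Fin N), ker N s η =
      (∫⁻ η : EuclideanSpace ℝ (Fin N), ENNReal.ofReal (ker N s η)).toReal := by
    rw [integral_eq_lintegral_of_nonneg_ae (Filter.Eventually.of_forall (ker_nonneg N s))
      (ker_measurable N s).aestronglyMeasurable]
  rw [hconv, step1, step2, step4, ← ENNReal.ofReal_mul (by positivity),
    ← ENNReal.ofReal_mul (by positivity), ENNReal.toReal_ofReal (by positivity)]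
  field_simp

lemma pConst_pos (N : ℕ) {s : ℝ} (hs : 0 < s) : 0 < pConst N s := by
  have h1 : 0 < Real.Gamma (((N : ℝ) + 2 * s) / 2) := Real.Gamma_pos_of_pos (by positivity)
  have h2 : 0 < Real.Gamma s := Real.Gamma_pos_of_pos hs
  have h3 : (0:ℝ) < π ^ ((N : ℝ) / 2) := Real.rpow_pos_of_pos pi_pos _
  unfold pConst; positivity

lemma pConst_mul_integral (N : ℕ) {s : ℝ} (hs : 0 < s) :
    pConst N s * ∫ η : EuclideanSpace ℝ (Fin N), ker N s η = 1 := by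
  have h1 : 0 < Real.Gamma (((N : ℝ) + 2 * s) / 2) := Real.Gamma_pos_of_pos (by positivity)
  have h2 : 0 < Real.Gamma s := Real.Gamma_pos_of_pos hs
  have h3 : (0:ℝ) < π ^ ((N : ℝ) / 2) := Real.rpow_pos_of_pos pi_pos _
  rw [integral_ker N hs]
  unfold pConst
  field_simp

lemma change_of_var (N : ℕ) {s : ℝ} (u : EuclideanSpace ℝ (Fin N) → ℝ)
    (x : EuclideanSpace ℝ (Fin N)) {y : ℝ} (hy : 0 < y) :
    ∫ ξ : EuclideanSpace ℝ (Fin N),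
        y ^ (2 * s) / (y ^ 2 + ‖x - ξ‖ ^ 2) ^ (((N : ℝ) + 2 * s) / 2) * u ξ =
      ∫ η : EuclideanSpace ℝ (Fin N), ker N s η * u (x + y • η) := by
  set β := ((N : ℝ) + 2 * s) / 2 with hβdef
  set f : EuclideanSpace ℝ (Fin N) → ℝ :=
    fun ξ => y ^ (2 * s) / (y ^ 2 + ‖x - ξ‖ ^ 2) ^ β * u ξ with hf
  have h1 : ∫ ξ, f ξ = ∫ ξ, f (x + ξ) := (integral_add_left_eq_self f x).symm
  have h2 : ∫ ξ, f (x + ξ) = (y ^ N : ℝ) • ∫ η, f (x + y • η) := by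
    have := Measure.integral_comp_smul (volume : Measure (EuclideanSpace ℝ (Fin N)))
      (fun ξ => f (x + ξ)) y
    rw [finrank_euclideanSpace_fin] at this
    rw [this, smul_smul, abs_of_nonneg (inv_nonneg.mpr (by positivity)),
      mul_inv_cancel₀ (by positivity), one_smul]
  rw [h1, h2]
  rw [← integral_smul]
  apply integral_congr_ae
  apply Filter.Eventually.of_forall
  intro η
  have hnorm : ‖x - (x + y • η)‖ ^ 2 = y ^ 2 * ‖η‖ ^ 2 := by
    have : x - (x + y • η) = -(y • η) := by abel
    rw [this, norm_neg, norm_smul, Real.norm_eq_abs, mul_pow, sq_abs]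
  rw [hf]
  simp only [smul_eq_mul]
  rw [hnorm]
  have key : (y ^ N : ℝ) * (y ^ (2 * s) / (y ^ 2 + y ^ 2 * ‖η‖ ^ 2) ^ β) = ker N s η := by
    have hT : (0:ℝ) ≤ ‖η‖ ^ 2 := by positivity
    have h3 : y ^ 2 + y ^ 2 * ‖η‖ ^ 2 = y ^ 2 * (1 + ‖η‖ ^ 2) := by ring
    rw [h3, Real.mul_rpow (by positivity) (by positivity)]
    have h4 : ((y ^ 2 : ℝ)) ^ β = y ^ (2 * β) := by
      rw [← Real.rpow_natCast y 2, ← Real.rpow_mul hy.le]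
      norm_num
    have h5 : (y ^ N : ℝ) = y ^ (N : ℝ) := by rw [Real.rpow_natCast]
    have h6 : 2 * β = (N : ℝ) + 2 * s := by rw [hβdef]; ring
    rw [h4, h5, h6]
    have h7 : (0:ℝ) < 1 + ‖η‖ ^ 2 := by positivity
    have h8 : (0:ℝ) < y ^ ((N : ℝ) + 2 * s) := Real.rpow_pos_of_pos hy _
    have h9 : y ^ (N : ℝ) * y ^ (2 * s) = y ^ ((N : ℝ) + 2 * s) := (Real.rpow_add hy _ _).symm
    have hker : ker N s η = ((1 + ‖η‖ ^ 2) ^ β)⁻¹ := by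
      unfold ker
      rw [show -(((N : ℝ) + 2 * s) / 2) = -β from rfl, Real.rpow_neg h7.le]
    have hB : y ^ ((N : ℝ)) ≠ 0 := (Real.rpow_pos_of_pos hy _).ne'
    have hC : y ^ (2 * s) ≠ 0 := (Real.rpow_pos_of_pos hy _).ne'
    have hD : (1 + ‖η‖ ^ 2) ^ β ≠ 0 := (Real.rpow_pos_of_pos h7 _).ne'
    rw [hker, ← h9]
    field_simp
  rw [← key]
  ring

lemma fracExt_rep (N : ℕ) {s : ℝ} (hs : 0 < s) (u : EuclideanSpace ℝ (Fin N) → ℝ)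
    (x : EuclideanSpace ℝ (Fin N)) {y : ℝ} (hy : 0 ≤ y) :
    fracExt N s u x y = pConst N s * ∫ η : EuclideanSpace ℝ (Fin N), ker N s η * u (x + y • η) := by
  rcases eq_or_lt_of_le hy with h | h
  · rw [fracExt, if_pos h.symm.symm.symm]
    have : (fun η : EuclideanSpace ℝ (Fin N) => ker N s η * u (x + y • η)) =
        fun η => ker N s η * u x := by
      funext η; rw [← h, zero_smul, add_zero]
    rw [this, integral_mul_const, ← mul_assoc, pConst_mul_integral N hs, one_mul]
  · rw [fracExt, if_neg h.ne', change_of_var N u x h]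

lemma integrable_ker_mul (N : ℕ) {s : ℝ} (hs : 0 < s) {u : EuclideanSpace ℝ (Fin N) → ℝ}
    {M : ℝ} (hu : Measurable u) (hM : ∀ z, |u z| ≤ M)
    (x : EuclideanSpace ℝ (Fin N)) (y : ℝ) :
    Integrable (fun η : EuclideanSpace ℝ (Fin N) => ker N s η * u (x + y • η)) := by
  refine Integrable.mono' ((integrable_ker N hs).mul_const M) ?_
    (Filter.Eventually.of_forall fun η => ?_)
  · exact ((ker_measurable N s).mul
      (hu.comp (measurable_const.add (measurable_id.const_smul y)))).aestronglyMeasurable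
  · rw [Real.norm_eq_abs, abs_mul, abs_of_nonneg (ker_nonneg N s η)]
    exact mul_le_mul_of_nonneg_left (hM _) (ker_nonneg N s η)

lemma fracExt_bound (N : ℕ) {s : ℝ} (hs : 0 < s) {u : EuclideanSpace ℝ (Fin N) → ℝ}
    {M : ℝ} (hu : Measurable u) (hM : ∀ z, |u z| ≤ M)
    (x : EuclideanSpace ℝ (Fin N)) {y : ℝ} (hy : 0 ≤ y) :
    |fracExt N s u x y| ≤ M := by
  rw [fracExt_rep N hs u x hy, abs_mul, abs_of_nonneg (pConst_pos N hs).le]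
  calc pConst N s * |∫ η : EuclideanSpace ℝ (Fin N), ker N s η * u (x + y • η)|
      ≤ pConst N s * ∫ η : EuclideanSpace ℝ (Fin N), ker N s η * M := by
        apply mul_le_mul_of_nonneg_left _ (pConst_pos N hs).le
        rw [← Real.norm_eq_abs]
        apply norm_integral_le_of_norm_le ((integrable_ker N hs).mul_const M)
        apply Filter.Eventually.of_forall
        intro η
        rw [Real.norm_eq_abs, abs_mul, abs_of_nonneg (ker_nonneg N s η)]
        exact mul_le_mul_of_nonneg_left (hM _) (ker_nonneg N s η)
    _ = M := by
        rw [integral_mul_const, ← mul_assoc, pConst_mul_integral N hs, one_mul]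

lemma fracExt_xdiff (N : ℕ) {s : ℝ} (hs : 0 < s) {u : EuclideanSpace ℝ (Fin N) → ℝ}
    {M A : ℝ} (hu : Measurable u) (hM : ∀ z, |u z| ≤ M)
    (hA : ∀ z w : EuclideanSpace ℝ (Fin N), |u z - u w| ≤ A * ‖z - w‖ ^ s)
    (x₁ x₂ : EuclideanSpace ℝ (Fin N)) {y : ℝ} (hy : 0 ≤ y) :
    |fracExt N s u x₁ y - fracExt N s u x₂ y| ≤ A * ‖x₁ - x₂‖ ^ s := by
  rw [fracExt_rep N hs u x₁ hy, fracExt_rep N hs u x₂ hy, ← mul_sub, abs_mul,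
    abs_of_nonneg (pConst_pos N hs).le,
    ← integral_sub (integrable_ker_mul N hs hu hM x₁ y) (integrable_ker_mul N hs hu hM x₂ y)]
  calc pConst N s * |∫ η : EuclideanSpace ℝ (Fin N),
        (ker N s η * u (x₁ + y • η) - ker N s η * u (x₂ + y • η))|
      ≤ pConst N s * ∫ η : EuclideanSpace ℝ (Fin N), ker N s η * (A * ‖x₁ - x₂‖ ^ s) := by
        apply mul_le_mul_of_nonneg_left _ (pConst_pos N hs).le
        rw [← Real.norm_eq_abs]
        apply norm_integral_le_of_norm_le ((integrable_ker N hs).mul_const _)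
        apply Filter.Eventually.of_forall
        intro η
        rw [← mul_sub, Real.norm_eq_abs, abs_mul, abs_of_nonneg (ker_nonneg N s η)]
        apply mul_le_mul_of_nonneg_left _ (ker_nonneg N s η)
        have : (x₁ + y • η) - (x₂ + y • η) = x₁ - x₂ := by abel
        calc |u (x₁ + y • η) - u (x₂ + y • η)| ≤ A * ‖(x₁ + y • η) - (x₂ + y • η)‖ ^ s := hA _ _
          _ = A * ‖x₁ - x₂‖ ^ s := by rw [this]
    _ = A * ‖x₁ - x₂‖ ^ s := by
        rw [integral_mul_const, ← mul_assoc, pConst_mul_integral N hs, one_mul]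

lemma fracExt_ydiff (N : ℕ) {s : ℝ} (hs : 0 < s) {u : EuclideanSpace ℝ (Fin N) → ℝ}
    {M A : ℝ} (hA0 : 0 ≤ A) (hu : Measurable u) (hM : ∀ z, |u z| ≤ M)
    (hA : ∀ z w : EuclideanSpace ℝ (Fin N), |u z - u w| ≤ A * ‖z - w‖ ^ s)
    (x : EuclideanSpace ℝ (Fin N)) {y₁ y₂ : ℝ} (hy₁ : 0 ≤ y₁) (hy₂ : 0 ≤ y₂) :
    |fracExt N s u x y₁ - fracExt N s u x y₂| ≤
      (pConst N s * ∫ η : EuclideanSpace ℝ (Fin N), ‖η‖ ^ s * ker N s η) *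
        (A * |y₁ - y₂| ^ s) := by
  rw [fracExt_rep N hs u x hy₁, fracExt_rep N hs u x hy₂, ← mul_sub, abs_mul,
    abs_of_nonneg (pConst_pos N hs).le,
    ← integral_sub (integrable_ker_mul N hs hu hM x y₁) (integrable_ker_mul N hs hu hM x y₂)]
  rw [mul_assoc, mul_comm (∫ η : EuclideanSpace ℝ (Fin N), ‖η‖ ^ s * ker N s η) _, ← mul_assoc,
    mul_assoc (pConst N s)]
  apply mul_le_mul_of_nonneg_left _ (pConst_pos N hs).le
  calc |∫ η : EuclideanSpace ℝ (Fin N),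
        (ker N s η * u (x + y₁ • η) - ker N s η * u (x + y₂ • η))|
      ≤ ∫ η : EuclideanSpace ℝ (Fin N), (A * |y₁ - y₂| ^ s) * (‖η‖ ^ s * ker N s η) := by
        rw [← Real.norm_eq_abs]
        apply norm_integral_le_of_norm_le ((integrable_rpow_mul_ker N hs).const_mul _)
        apply Filter.Eventually.of_forall
        intro η
        rw [← mul_sub, Real.norm_eq_abs, abs_mul, abs_of_nonneg (ker_nonneg N s η)]
        have hd : (x + y₁ • η) - (x + y₂ • η) = (y₁ - y₂) • η := by
          rw [sub_smul]; abel
        have hn : ‖(x + y₁ • η) - (x + y₂ • η)‖ ^ s = |y₁ - y₂| ^ s * ‖η‖ ^ s := by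
          rw [hd, norm_smul, Real.norm_eq_abs,
            Real.mul_rpow (abs_nonneg _) (norm_nonneg _)]
        calc ker N s η * |u (x + y₁ • η) - u (x + y₂ • η)|
            ≤ ker N s η * (A * (|y₁ - y₂| ^ s * ‖η‖ ^ s)) := by
              apply mul_le_mul_of_nonneg_left _ (ker_nonneg N s η)
              rw [← hn]; exact hA _ _
          _ = (A * |y₁ - y₂| ^ s) * (‖η‖ ^ s * ker N s η) := by ring
    _ = (A * |y₁ - y₂| ^ s) * ∫ η : EuclideanSpace ℝ (Fin N), ‖η‖ ^ s * ker N s η := by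
        rw [integral_const_mul]

/-- Hölder regularity of the fractional Poisson extension: there is `C = C(N,s) > 0` such
that for every bounded `u ∈ C^{0,s}(ℝ^N)` (say `|u| ≤ M` and `[u]_{C^{0,s}} ≤ A`), the
extension `E_s u` is `C^{0,s}` on the closed half space, with
`‖E_s u‖_{C^{0,s}(\overline{ℝ^{N+1}_+})} ≤ C ‖u‖_{C^{0,s}(ℝ^N)}`. -/
theorem fracExt_holder (N : ℕ) (hN : 1 ≤ N) (s : ℝ) (hs : s ∈ Set.Ioo (0:ℝ) 1) :
    ∃ C > 0, ∀ (u : EuclideanSpace ℝ (Fin N) → ℝ) (M A : ℝ),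
      0 ≤ M → 0 ≤ A → Measurable u →
      (∀ x, |u x| ≤ M) →
      (∀ x y : EuclideanSpace ℝ (Fin N), |u x - u y| ≤ A * ‖x - y‖ ^ s) →
      (∀ (x : EuclideanSpace ℝ (Fin N)) (y : ℝ), 0 ≤ y →
        |fracExt N s u x y| ≤ C * (M + A)) ∧
      (∀ (x₁ x₂ : EuclideanSpace ℝ (Fin N)) (y₁ y₂ : ℝ), 0 ≤ y₁ → 0 ≤ y₂ →
        |fracExt N s u x₁ y₁ - fracExt N s u x₂ y₂| ≤
          C * (M + A) * Real.sqrt (‖x₁ - x₂‖ ^ 2 + (y₁ - y₂) ^ 2) ^ s) := by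
  obtain ⟨hs0, hs1⟩ := hs
  set c₂ : ℝ := pConst N s * ∫ η : EuclideanSpace ℝ (Fin N), ‖η‖ ^ s * ker N s η with hc₂
  have hc₂0 : 0 ≤ c₂ := mul_nonneg (pConst_pos N hs0).le
    (integral_nonneg fun η => mul_nonneg (Real.rpow_nonneg (norm_nonneg _) _) (ker_nonneg N s η))
  refine ⟨1 + c₂, by linarith, ?_⟩
  intro u M A hM0 hA0 hu hM hA
  constructor
  · intro x y hy
    calc |fracExt N s u x y| ≤ M := fracExt_bound N hs0 hu hM x hy
      _ ≤ (1 + c₂) * (M + A) := by nlinarith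
  · intro x₁ x₂ y₁ y₂ hy₁ hy₂
    have hd0 : 0 ≤ Real.sqrt (‖x₁ - x₂‖ ^ 2 + (y₁ - y₂) ^ 2) := Real.sqrt_nonneg _
    have hx_le : ‖x₁ - x₂‖ ≤ Real.sqrt (‖x₁ - x₂‖ ^ 2 + (y₁ - y₂) ^ 2) := by
      rw [show ‖x₁ - x₂‖ = Real.sqrt (‖x₁ - x₂‖ ^ 2) from (Real.sqrt_sq (norm_nonneg _)).symm]
      exact Real.sqrt_le_sqrt (by nlinarith [sq_nonneg (y₁ - y₂), Real.sq_sqrt (sq_nonneg ‖x₁ - x₂‖)])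
    have hy_le : |y₁ - y₂| ≤ Real.sqrt (‖x₁ - x₂‖ ^ 2 + (y₁ - y₂) ^ 2) := by
      rw [show |y₁ - y₂| = Real.sqrt (|y₁ - y₂| ^ 2) from (Real.sqrt_sq (abs_nonneg _)).symm]
      exact Real.sqrt_le_sqrt (by rw [sq_abs]; nlinarith [sq_nonneg ‖x₁ - x₂‖])
    have h1 : ‖x₁ - x₂‖ ^ s ≤ Real.sqrt (‖x₁ - x₂‖ ^ 2 + (y₁ - y₂) ^ 2) ^ s :=
      Real.rpow_le_rpow (norm_nonneg _) hx_le hs0.le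
    have h2 : |y₁ - y₂| ^ s ≤ Real.sqrt (‖x₁ - x₂‖ ^ 2 + (y₁ - y₂) ^ 2) ^ s :=
      Real.rpow_le_rpow (abs_nonneg _) hy_le hs0.le
    have hds : 0 ≤ Real.sqrt (‖x₁ - x₂‖ ^ 2 + (y₁ - y₂) ^ 2) ^ s := Real.rpow_nonneg hd0 _
    calc |fracExt N s u x₁ y₁ - fracExt N s u x₂ y₂|
        ≤ |fracExt N s u x₁ y₁ - fracExt N s u x₂ y₁| +
            |fracExt N s u x₂ y₁ - fracExt N s u x₂ y₂| := abs_sub_le _ _ _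
      _ ≤ A * ‖x₁ - x₂‖ ^ s + c₂ * (A * |y₁ - y₂| ^ s) :=
          add_le_add (fracExt_xdiff N hs0 hu hM hA x₁ x₂ hy₁)
            (fracExt_ydiff N hs0 hA0 hu hM hA x₂ hy₁ hy₂)
      _ ≤ A * Real.sqrt (‖x₁ - x₂‖ ^ 2 + (y₁ - y₂) ^ 2) ^ s +
            c₂ * (A * Real.sqrt (‖x₁ - x₂‖ ^ 2 + (y₁ - y₂) ^ 2) ^ s) :=
          add_le_add (mul_le_mul_of_nonneg_left h1 hA0)
            (mul_le_mul_of_nonneg_left (mul_le_mul_of_nonneg_left h2 hA0) hc₂0)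
      _ = (1 + c₂) * A * Real.sqrt (‖x₁ - x₂‖ ^ 2 + (y₁ - y₂) ^ 2) ^ s := by ring
      _ ≤ (1 + c₂) * (M + A) * Real.sqrt (‖x₁ - x₂‖ ^ 2 + (y₁ - y₂) ^ 2) ^ s := by
          apply mul_le_mul_of_nonneg_right _ hds
          exact mul_le_mul_of_nonneg_left (by linarith) (by linarith)
end
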